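/- arXiv:math/0108035 — 7 statements merged into one kernel-verified Lean document; each statement's English description precedes it below -/
import Mathlib

section
/- The double integral ∫_𝔻 ∫_𝔻 1/|1 − z·conj(w)|² dλ(z) dλ(w) is finite, where both integrations are over the open unit disc 𝔻 ⊂ ℂ. -/
open MeasureTheory Set Metric Real
open scoped ENNReal

/-- Algebraic identity behind `|1 - z w̄|² = |z - w|² + (1-|z|²)(1-|w|²)`. -/
lemma normSq_one_sub_mul_conj (z w : ℂ) :
    Complex.normSq (1 - z * (starRingEnd ℂ) w) =
      Complex.normSq (z - w) + (1 - Complex.normSq z) * (1 - Complex.normSq w) := by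
  simp only [Complex.normSq_apply, Complex.sub_re, Complex.sub_im, Complex.one_re,
    Complex.one_im, Complex.mul_re, Complex.mul_im, Complex.conj_re, Complex.conj_im]
  ring

lemma abs_sub_sq_le {z w : ℂ} (hz : ‖z‖ ≤ 1) (hw : ‖w‖ ≤ 1) :
    ‖z - w‖ ^ 2 ≤ ‖1 - z * (starRingEnd ℂ) w‖ ^ 2 := by
  rw [Complex.sq_norm, Complex.sq_norm, normSq_one_sub_mul_conj]
  have h1 : Complex.normSq z ≤ 1 := by
    rw [← Complex.sq_norm]; nlinarith [norm_nonneg z]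
  have h2 : Complex.normSq w ≤ 1 := by
    rw [← Complex.sq_norm]; nlinarith [norm_nonneg w]
  nlinarith

lemma one_sub_abs_le {z w : ℂ} (hz : ‖z‖ ≤ 1) :
    1 - ‖w‖ ≤ ‖1 - z * (starRingEnd ℂ) w‖ := by
  have h := norm_sub_norm_le (1 : ℂ) (z * (starRingEnd ℂ) w)
  simp only [norm_one, norm_mul, Complex.norm_conj] at h
  have : ‖z‖ * ‖w‖ ≤ ‖w‖ := by
    nlinarith [norm_nonneg w, norm_nonneg z]
  linarith

lemma vol_unit_ball : volume (ball (0:ℂ) 1) = ENNReal.ofReal π := by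
  rw [Complex.volume_ball, ← NNReal.coe_real_pi, ENNReal.ofReal_coe_nnreal]
  simp

lemma vol_ball_eq (w : ℂ) {r : ℝ} (hr : 0 ≤ r) :
    volume (ball w r) = ENNReal.ofReal (r ^ 2 * π) := by
  rw [Complex.volume_ball, ← ENNReal.ofReal_pow hr, ← ENNReal.ofReal_coe_nnreal,
    ← ENNReal.ofReal_mul (by positivity), NNReal.coe_real_pi]

lemma vol_cball_eq (w : ℂ) {r : ℝ} (hr : 0 ≤ r) :
    volume (closedBall w r) = ENNReal.ofReal (r ^ 2 * π) := by
  rw [Complex.volume_closedBall, ← ENNReal.ofReal_pow hr, ← ENNReal.ofReal_coe_nnreal,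
    ← ENNReal.ofReal_mul (by positivity), NNReal.coe_real_pi]

/-- 1D estimate: `∫₀ᵀ π t^{-3/4} dt ≤ 4 π T^{1/4}`. -/
lemma lintegral_Ioc_rpow_le {T : ℝ} (hT : 0 < T) :
    (∫⁻ t in Ioc (0:ℝ) T, ENNReal.ofReal (π * t ^ (-(3:ℝ)/4)))
      ≤ ENNReal.ofReal (π * 4 * T ^ ((1:ℝ)/4)) := by
  have hint : IntegrableOn (fun t : ℝ => π * t ^ (-(3:ℝ)/4)) (Ioc (0:ℝ) T) :=
    ((intervalIntegral.intervalIntegrable_rpow' (by norm_num)).1).const_mul π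
  have hnn : 0 ≤ᵐ[volume.restrict (Ioc (0:ℝ) T)]
      fun t : ℝ => π * t ^ (-(3:ℝ)/4) := by
    filter_upwards [ae_restrict_mem measurableSet_Ioc] with t ht
    have := Real.rpow_nonneg (le_of_lt ht.1) (-(3:ℝ)/4)
    positivity
  rw [← ofReal_integral_eq_lintegral_ofReal hint hnn]
  apply ENNReal.ofReal_le_ofReal
  rw [MeasureTheory.integral_const_mul]
  have : ∫ t in Ioc (0:ℝ) T, t ^ (-(3:ℝ)/4) = 4 * T ^ ((1:ℝ)/4) := by
    rw [← intervalIntegral.integral_of_le hT.le,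
      integral_rpow (Or.inl (by norm_num))]
    norm_num
    ring
  rw [this]; ring_nf; exact le_rfl

/-- Inner integral bound: for `|w| < 1`, `∫_𝔻 1/|1-z w̄|² dλ(z) ≤ 4π/√(1-|w|)`. -/
lemma inner_bound {w : ℂ} (hw : ‖w‖ < 1) :
    (∫⁻ z in ball (0 : ℂ) 1,
        ENNReal.ofReal (1 / ‖1 - z * (starRingEnd ℂ) w‖ ^ 2))
      ≤ ENNReal.ofReal (4 * π / Real.sqrt (1 - ‖w‖)) := by
  set d : ℝ := 1 - ‖w‖ with hd_def
  have hd : 0 < d := by simp only [hd_def]; linarith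
  set T : ℝ := (d ^ 2)⁻¹ with hT_def
  have hT : 0 < T := by positivity
  have fmeas : Measurable fun z : ℂ =>
      1 / ‖1 - z * (starRingEnd ℂ) w‖ ^ 2 := by
    fun_prop
  rw [lintegral_eq_lintegral_meas_lt _ (ae_of_all _ (fun z => by positivity))
    fmeas.aemeasurable]
  have step1 : (∫⁻ t in Ioi (0:ℝ),
      (volume.restrict (ball (0:ℂ) 1))
        {z | t < 1 / ‖1 - z * (starRingEnd ℂ) w‖ ^ 2})
      ≤ ∫⁻ t in Ioi (0:ℝ),
        (Ioc (0:ℝ) T).indicator (fun t => ENNReal.ofReal (π * t ^ (-(3:ℝ)/4))) t := by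
    apply setLIntegral_mono
    · exact (by fun_prop : Measurable fun t : ℝ =>
        ENNReal.ofReal (π * t ^ (-(3:ℝ)/4))).indicator measurableSet_Ioc
    intro t ht
    have ht0 : (0:ℝ) < t := ht
    rw [Measure.restrict_apply' measurableSet_ball]
    by_cases htT : t ≤ T
    · have htmem : t ∈ Ioc (0:ℝ) T := ⟨ht0, htT⟩
      rw [Set.indicator_of_mem htmem]
      by_cases ht1 : t ≤ 1
      · calc volume ({z | t < 1 / ‖1 - z * (starRingEnd ℂ) w‖ ^ 2}
              ∩ ball (0:ℂ) 1)
            ≤ volume (ball (0:ℂ) 1) := measure_mono inter_subset_right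
          _ = ENNReal.ofReal π := vol_unit_ball
          _ ≤ ENNReal.ofReal (π * t ^ (-(3:ℝ)/4)) := by
              apply ENNReal.ofReal_le_ofReal
              have h1 : (1:ℝ) ≤ t ^ (-(3:ℝ)/4) := by
                calc (1:ℝ) = t ^ (0:ℝ) := (Real.rpow_zero t).symm
                _ ≤ t ^ (-(3:ℝ)/4) :=
                    Real.rpow_le_rpow_of_exponent_ge ht0 ht1 (by norm_num)
              nlinarith [Real.pi_pos]
      · push_neg at ht1
        have hsub : {z | t < 1 / ‖1 - z * (starRingEnd ℂ) w‖ ^ 2}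
            ∩ ball (0:ℂ) 1 ⊆ ball w (Real.sqrt t⁻¹) := by
          rintro z ⟨hz1, hz2⟩
          simp only [mem_setOf_eq] at hz1
          set A : ℝ := ‖1 - z * (starRingEnd ℂ) w‖ with hA_def
          have hA2 : 0 < A ^ 2 := by
            rcases eq_or_lt_of_le (sq_nonneg A) with h | h
            · exfalso; rw [← h] at hz1; simp at hz1; linarith
            · exact h
          have h1 : t * A ^ 2 < 1 := by rwa [lt_div_iff₀ hA2] at hz1
          have hAlt : A ^ 2 < t⁻¹ := by
            nlinarith [mul_inv_cancel₀ (ne_of_gt ht0)]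
          have hzball : ‖z‖ ≤ 1 := le_of_lt (by
            rwa [mem_ball, Complex.dist_eq, sub_zero] at hz2)
          have hzw : ‖z - w‖ ^ 2 ≤ A ^ 2 := abs_sub_sq_le hzball hw.le
          rw [mem_ball, Complex.dist_eq]
          exact (Real.lt_sqrt (norm_nonneg _)).2 (lt_of_le_of_lt hzw hAlt)
        calc volume ({z | t < 1 / ‖1 - z * (starRingEnd ℂ) w‖ ^ 2}
              ∩ ball (0:ℂ) 1)
            ≤ volume (ball w (Real.sqrt t⁻¹)) := measure_mono hsub
          _ = ENNReal.ofReal (t⁻¹ * π) := by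
              rw [vol_ball_eq w (Real.sqrt_nonneg _), Real.sq_sqrt (by positivity)]
          _ ≤ ENNReal.ofReal (π * t ^ (-(3:ℝ)/4)) := by
              apply ENNReal.ofReal_le_ofReal
              have h1 : t⁻¹ ≤ t ^ (-(3:ℝ)/4) := by
                rw [← Real.rpow_neg_one]
                exact Real.rpow_le_rpow_of_exponent_le ht1.le (by norm_num)
              nlinarith [Real.pi_pos]
    · push_neg at htT
      rw [Set.indicator_of_notMem (fun h => absurd h.2 (not_le.2 htT))]
      have hempty : {z | t < 1 / ‖1 - z * (starRingEnd ℂ) w‖ ^ 2}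
          ∩ ball (0:ℂ) 1 = ∅ := by
        ext z
        simp only [mem_inter_iff, mem_setOf_eq, mem_empty_iff_false, iff_false, not_and]
        intro hz1 hz2
        set A : ℝ := ‖1 - z * (starRingEnd ℂ) w‖ with hA_def
        have hzball : ‖z‖ ≤ 1 := le_of_lt (by
          rwa [mem_ball, Complex.dist_eq, sub_zero] at hz2)
        have hdA : d ≤ A := one_sub_abs_le hzball
        have hd2A2 : d ^ 2 ≤ A ^ 2 := by nlinarith
        have hle : 1 / A ^ 2 ≤ T := by
          rw [hT_def, one_div]
          exact inv_anti₀ (by positivity) hd2A2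
        linarith
      rw [hempty, measure_empty]
  have step2 : (∫⁻ t in Ioi (0:ℝ),
      (Ioc (0:ℝ) T).indicator (fun t => ENNReal.ofReal (π * t ^ (-(3:ℝ)/4))) t)
      = ∫⁻ t in Ioc (0:ℝ) T, ENNReal.ofReal (π * t ^ (-(3:ℝ)/4)) := by
    rw [lintegral_indicator measurableSet_Ioc, Measure.restrict_restrict measurableSet_Ioc,
      inter_eq_self_of_subset_left Ioc_subset_Ioi_self]
  refine le_trans step1 (le_of_eq step2 |>.trans ?_)
  calc (∫⁻ t in Ioc (0:ℝ) T, ENNReal.ofReal (π * t ^ (-(3:ℝ)/4)))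
      ≤ ENNReal.ofReal (π * 4 * T ^ ((1:ℝ)/4)) := lintegral_Ioc_rpow_le hT
    _ = ENNReal.ofReal (4 * π / Real.sqrt d) := by
        congr 1
        have hsd : Real.sqrt d ^ (4:ℕ) = d ^ 2 := by
          have := Real.sq_sqrt hd.le
          nlinarith [Real.sqrt_nonneg d]
        have h4 : T ^ ((1:ℝ)/4) = (Real.sqrt d)⁻¹ := by
          rw [hT_def, ← hsd, Real.inv_rpow (by positivity),
            ← Real.rpow_natCast (Real.sqrt d) 4, ← Real.rpow_mul (Real.sqrt_nonneg d)]
          norm_num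
        rw [h4]; ring

/-- Outer integral finiteness: `∫_𝔻 4π/√(1-|w|) dλ(w) < ∞`. -/
lemma outer_lt_top :
    (∫⁻ w in ball (0 : ℂ) 1,
        ENNReal.ofReal (4 * π / Real.sqrt (1 - ‖w‖))) < ⊤ := by
  have gmeas : Measurable fun w : ℂ => 4 * π / Real.sqrt (1 - ‖w‖) := by
    exact measurable_const.div
      (Real.continuous_sqrt.measurable.comp (measurable_const.sub measurable_norm))
  rw [lintegral_eq_lintegral_meas_lt _ (ae_of_all _ (fun w => by positivity))
    gmeas.aemeasurable]
  rw [← Ioc_union_Ioi_eq_Ioi (by positivity : (0:ℝ) ≤ 4 * π),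
    lintegral_union measurableSet_Ioi Ioc_disjoint_Ioi_same]
  refine ENNReal.add_lt_top.2 ⟨?_, ?_⟩
  · calc (∫⁻ t in Ioc (0:ℝ) (4*π),
        (volume.restrict (ball (0:ℂ) 1))
          {w | t < 4 * π / Real.sqrt (1 - ‖w‖)})
        ≤ ∫⁻ _ in Ioc (0:ℝ) (4*π), ENNReal.ofReal π := by
          apply setLIntegral_mono measurable_const
          intro t _
          rw [Measure.restrict_apply' measurableSet_ball]
          exact le_trans (measure_mono inter_subset_right) (le_of_eq vol_unit_ball)
      _ = ENNReal.ofReal π * volume (Ioc (0:ℝ) (4*π)) := setLIntegral_const _ _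
      _ < ⊤ := by
          rw [Real.volume_Ioc]
          exact ENNReal.mul_lt_top ENNReal.ofReal_lt_top ENNReal.ofReal_lt_top
  · have hb : ∀ t ∈ Ioi (4*π),
        (volume.restrict (ball (0:ℂ) 1))
          {w | t < 4 * π / Real.sqrt (1 - ‖w‖)}
        ≤ ENNReal.ofReal (32 * π ^ 3 * t ^ (-(2:ℝ))) := by
      intro t ht
      have ht4 : 4 * π < t := ht
      have ht0 : 0 < t := lt_trans (by positivity) ht4
      set c : ℝ := 1 - 16 * π ^ 2 / t ^ 2 with hc_def
      have hu0 : 0 < 16 * π ^ 2 / t ^ 2 := by positivity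
      have hu1 : 16 * π ^ 2 / t ^ 2 < 1 := by
        rw [div_lt_one (by positivity)]
        nlinarith [Real.pi_pos]
      have hc0 : 0 < c := by simp only [hc_def]; linarith
      have hc1 : c < 1 := by simp only [hc_def]; linarith
      rw [Measure.restrict_apply' measurableSet_ball]
      have hsub : {w : ℂ | t < 4 * π / Real.sqrt (1 - ‖w‖)} ∩ ball (0:ℂ) 1
          ⊆ ball (0:ℂ) 1 \ closedBall (0:ℂ) c := by
        rintro w ⟨hw1, hw2⟩
        refine ⟨hw2, ?_⟩
        simp only [mem_closedBall, Complex.dist_eq, sub_zero, not_le]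
        simp only [mem_setOf_eq] at hw1
        have hwd : ‖w‖ < 1 := by
          rwa [mem_ball, Complex.dist_eq, sub_zero] at hw2
        set dd : ℝ := 1 - ‖w‖ with hdd_def
        have hdd : 0 < dd := by simp only [hdd_def]; linarith
        have hs0 : 0 < Real.sqrt dd := Real.sqrt_pos.2 hdd
        have h1 : t * Real.sqrt dd < 4 * π := by rwa [lt_div_iff₀ hs0] at hw1
        have h2 : Real.sqrt dd < 4 * π / t := by rw [lt_div_iff₀ ht0]; linarith [mul_comm t (Real.sqrt dd)]
        have h3 : dd < (4 * π / t) ^ 2 := by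
          nlinarith [Real.sq_sqrt hdd.le, Real.sqrt_nonneg dd]
        have h4 : (4 * π / t) ^ 2 = 16 * π ^ 2 / t ^ 2 := by ring
        simp only [hc_def]
        simp only [hdd_def] at h3
        rw [h4] at h3
        linarith
      calc volume ({w : ℂ | t < 4 * π / Real.sqrt (1 - ‖w‖)} ∩ ball (0:ℂ) 1)
          ≤ volume (ball (0:ℂ) 1 \ closedBall (0:ℂ) c) := measure_mono hsub
        _ = volume (ball (0:ℂ) 1) - volume (closedBall (0:ℂ) c) := by
            apply measure_diff (closedBall_subset_ball hc1)
              measurableSet_closedBall.nullMeasurableSet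
            rw [vol_cball_eq _ hc0.le]
            exact ENNReal.ofReal_ne_top
        _ = ENNReal.ofReal (π - c ^ 2 * π) := by
            rw [vol_unit_ball, vol_cball_eq _ hc0.le,
              ← ENNReal.ofReal_sub _ (by positivity)]
        _ ≤ ENNReal.ofReal (32 * π ^ 3 * t ^ (-(2:ℝ))) := by
            apply ENNReal.ofReal_le_ofReal
            have hrp : t ^ (-(2:ℝ)) = (t ^ 2)⁻¹ := by
              rw [← Real.rpow_natCast t 2, ← Real.rpow_neg ht0.le]
              norm_num
            rw [hrp]
            have ht2 : 0 < t ^ 2 := by positivity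
            have key : π - c ^ 2 * π ≤ 32 * π ^ 3 / t ^ 2 := by
              have hc2 : π - c ^ 2 * π = π * (1 - c) * (1 + c) := by ring
              have h1c : 1 - c = 16 * π ^ 2 / t ^ 2 := by simp [hc_def]
              have h32 : 32 * π ^ 3 / t ^ 2 = 2 * π * (16 * π ^ 2 / t ^ 2) := by ring
              have h1pc : 1 + c ≤ 2 := by linarith
              rw [hc2, h1c, h32]
              calc π * (16 * π ^ 2 / t ^ 2) * (1 + c)
                  ≤ π * (16 * π ^ 2 / t ^ 2) * 2 :=
                    mul_le_mul_of_nonneg_left h1pc (by positivity)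
                _ = 2 * π * (16 * π ^ 2 / t ^ 2) := by ring
            rw [← div_eq_mul_inv]
            exact key
    calc (∫⁻ t in Ioi (4*π),
        (volume.restrict (ball (0:ℂ) 1))
          {w | t < 4 * π / Real.sqrt (1 - ‖w‖)})
        ≤ ∫⁻ t in Ioi (4*π), ENNReal.ofReal (32 * π ^ 3 * t ^ (-(2:ℝ))) :=
          setLIntegral_mono (by fun_prop) hb
      _ < ⊤ := by
          have hint : IntegrableOn (fun t : ℝ => 32 * π ^ 3 * t ^ (-(2:ℝ))) (Ioi (4*π)) :=
            (integrableOn_Ioi_rpow_of_lt (by norm_num) (by positivity)).const_mul _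
          have hnn : 0 ≤ᵐ[volume.restrict (Ioi (4*π))]
              fun t : ℝ => 32 * π ^ 3 * t ^ (-(2:ℝ)) := by
            filter_upwards [ae_restrict_mem measurableSet_Ioi] with t ht
            have ht0 : 0 < t := lt_trans (by positivity) ht
            have := Real.rpow_nonneg ht0.le (-(2:ℝ))
            positivity
          rw [← ofReal_integral_eq_lintegral_ofReal hint hnn]
          exact ENNReal.ofReal_lt_top

/-- `∫_𝔻 ∫_𝔻 1/|1 − z·conj w|² dλ(z) dλ(w) < ∞`. -/
theorem integral_one_div_abs_one_sub_mul_conj_sq_lt_top :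
    (∫⁻ w in Metric.ball (0 : ℂ) 1, ∫⁻ z in Metric.ball (0 : ℂ) 1,
      ENNReal.ofReal (1 / ‖1 - z * (starRingEnd ℂ) w‖ ^ 2)) < ⊤ := by
  have gmeas : Measurable fun w : ℂ =>
      ENNReal.ofReal (4 * π / Real.sqrt (1 - ‖w‖)) := by
    exact ENNReal.measurable_ofReal.comp (measurable_const.div
      (Real.continuous_sqrt.measurable.comp (measurable_const.sub measurable_norm)))
  calc (∫⁻ w in ball (0 : ℂ) 1, ∫⁻ z in ball (0 : ℂ) 1,
        ENNReal.ofReal (1 / ‖1 - z * (starRingEnd ℂ) w‖ ^ 2))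
      ≤ ∫⁻ w in ball (0 : ℂ) 1,
          ENNReal.ofReal (4 * π / Real.sqrt (1 - ‖w‖)) := by
        apply setLIntegral_mono gmeas
        intro w hw
        exact inner_bound (by rwa [mem_ball, Complex.dist_eq, sub_zero] at hw)
    _ < ⊤ := outer_lt_top
end

section
/- The series ∑_{n=0}^{∞} ∫_𝔻 | √((n+1)/π)·zⁿ·conj(z) − (n/√((n+1)π))·z^{n−1} |² dλ(z) converges (its value is ∑ₙ 1/((n+1)(n+2)) = 1). Consequently the canonical solution operator to ∂̄ restricted to (0,1)-forms with holomorphic coefficients on the unit disc, which sends the orthonormal basis element uₙ dz̄ with uₙ(z) = √((n+1)/π)·zⁿ to the function z ↦ √((n+1)/π)·zⁿ·conj(z) − (n/√((n+1)π))·z^{n−1}, is a Hilbert–Schmidt operator from A²_{(0,1)}(𝔻) to L²(𝔻). -/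
open MeasureTheory Metric Set Complex

lemma ball_monomial_integral (m : ℕ) :
    ∫ z in Metric.ball (0 : ℂ) 1, ‖z‖ ^ m = 2 * Real.pi / (m + 2) := by
  have key := MeasureTheory.integral_fun_norm_addHaar (volume : Measure ℂ)
    (fun y : ℝ => Set.indicator (Set.Iio (1:ℝ)) (fun y => y ^ m) y)
  rw [show (fun x : ℂ => Set.indicator (Set.Iio (1:ℝ)) (fun y => y ^ m) ‖x‖) =
      Set.indicator (Metric.ball (0:ℂ) 1) (fun z => ‖z‖ ^ m) from ?_] at key
  · rw [integral_indicator measurableSet_ball] at key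
    rw [key]
    have h1 : Module.finrank ℝ ℂ = 2 := Complex.finrank_real_complex
    have h2 : volume.real (ball (0:ℂ) 1) = Real.pi := by
      rw [Measure.real, Complex.volume_ball]
      simp [ENNReal.toReal_mul]
    rw [h1, h2]
    have h3 : ∫ (y : ℝ) in Ioi 0, y ^ (2 - 1) • (Iio 1).indicator (fun y => y ^ m) y
        = ∫ (y : ℝ) in Ioo (0:ℝ) 1, y ^ (m+1) := by
      have : ∀ y : ℝ, y ^ (2 - 1) • (Iio 1).indicator (fun y => y ^ m) y
          = (Iio 1).indicator (fun y : ℝ => y ^ (m+1)) y := by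
        intro y
        simp only [Set.indicator_apply, smul_eq_mul]
        split_ifs <;> ring
      simp_rw [this]
      rw [integral_indicator measurableSet_Iio, Measure.restrict_restrict measurableSet_Iio,
        show Iio (1:ℝ) ∩ Ioi 0 = Ioo (0:ℝ) 1 from by ext y; simp [mem_Ioo, and_comm]]
    rw [h3]
    have h4 : ∫ (y : ℝ) in Ioo (0:ℝ) 1, y ^ (m+1) = 1 / (m + 2) := by
      rw [← integral_Ioc_eq_integral_Ioo, ← intervalIntegral.integral_of_le zero_le_one,
        integral_pow]
      push_cast; ring
    rw [h4]
    rw [nsmul_eq_mul, smul_eq_mul]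
    push_cast
    ring
  · ext x
    by_cases h : ‖x‖ < 1 <;>
      simp [Set.indicator_apply, mem_ball_zero_iff, h]

lemma ball_mono_integrable (m : ℕ) :
    IntegrableOn (fun z : ℂ => ‖z‖ ^ m) (Metric.ball 0 1) := by
  have h : IntegrableOn (fun z : ℂ => ‖z‖ ^ m) (Metric.closedBall 0 1) :=
    (Continuous.continuousOn (by continuity)).integrableOn_compact (isCompact_closedBall _ _)
  exact h.mono_set ball_subset_closedBall

lemma pointwise_eq (m : ℕ) (z : ℂ) :
    ‖((Real.sqrt (((m:ℝ) + 1 + 1) / Real.pi) : ℂ) * z ^ (m+1) * (starRingEnd ℂ) z -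
          (((m:ℂ) + 1) / (Real.sqrt (((m:ℝ) + 1 + 1) * Real.pi) : ℂ)) * z ^ m)‖ ^ 2
    = (Real.sqrt (((m:ℝ) + 1 + 1) / Real.pi))^2 * ‖z‖ ^ (2*m+4)
      - 2 * (Real.sqrt (((m:ℝ) + 1 + 1) / Real.pi) * (((m:ℝ)+1) / Real.sqrt (((m:ℝ) + 1 + 1) * Real.pi))) * ‖z‖ ^ (2*m+2)
      + (((m:ℝ)+1) / Real.sqrt (((m:ℝ) + 1 + 1) * Real.pi))^2 * ‖z‖ ^ (2*m) := by
  set a : ℝ := Real.sqrt (((m:ℝ) + 1 + 1) / Real.pi)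
  set s : ℝ := Real.sqrt (((m:ℝ) + 1 + 1) * Real.pi)
  have hb : ((m:ℂ) + 1) / (s:ℂ) = ((((m:ℝ)+1)/s : ℝ) : ℂ) := by push_cast; ring
  rw [hb, Complex.sq_norm, Complex.normSq_sub]
  have h1 : Complex.normSq ((a:ℂ) * z ^ (m+1) * (starRingEnd ℂ) z) =
      a^2 * (Complex.normSq z)^(m+1) * Complex.normSq z := by
    rw [Complex.normSq_mul, Complex.normSq_mul, map_pow, Complex.normSq_conj,
      Complex.normSq_ofReal, sq]
  have h2 : Complex.normSq (((((m:ℝ)+1)/s : ℝ) : ℂ) * z ^ m) =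
      (((m:ℝ)+1)/s)^2 * (Complex.normSq z)^m := by
    rw [Complex.normSq_mul, map_pow, Complex.normSq_ofReal, sq]
  have h3 : ((a:ℂ) * z ^ (m+1) * (starRingEnd ℂ) z) * (starRingEnd ℂ) ((((((m:ℝ)+1)/s : ℝ) : ℂ)) * z ^ m)
      = ((a * (((m:ℝ)+1)/s) * (Complex.normSq z)^(m+1) : ℝ) : ℂ) := by
    rw [map_mul, map_pow, Complex.conj_ofReal]
    push_cast
    rw [← Complex.mul_conj]
    ring
  rw [h1, h2, h3, Complex.ofReal_re]
  rw [← Complex.sq_norm]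
  ring

lemma integral_split (A B C : ℝ) (p q r : ℕ) :
    ∫ z in Metric.ball (0:ℂ) 1,
      (A * ‖z‖ ^ p - B * ‖z‖ ^ q + C * ‖z‖ ^ r)
    = A * (2*Real.pi/(p+2)) - B*(2*Real.pi/(q+2)) + C*(2*Real.pi/(r+2)) := by
  have hp := (ball_mono_integrable p).const_mul A
  have hq := (ball_mono_integrable q).const_mul B
  have hr := (ball_mono_integrable r).const_mul C
  have hpq : MeasureTheory.Integrable
      (fun x : ℂ => A * ‖x‖ ^ p - B * ‖x‖ ^ q)
      (MeasureTheory.volume.restrict (Metric.ball 0 1)) := hp.sub hq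
  rw [MeasureTheory.integral_add hpq hr, MeasureTheory.integral_sub hp hq,
    MeasureTheory.integral_const_mul, MeasureTheory.integral_const_mul,
    MeasureTheory.integral_const_mul,
    ball_monomial_integral, ball_monomial_integral, ball_monomial_integral]

lemma integral_value (n : ℕ) :
    (∫ z in Metric.ball (0 : ℂ) 1,
        ‖((Real.sqrt (((n : ℝ) + 1) / Real.pi) : ℂ) * z ^ n * (starRingEnd ℂ) z -
          ((n : ℂ) / (Real.sqrt (((n : ℝ) + 1) * Real.pi) : ℂ)) * z ^ (n - 1))‖ ^ 2)
    = 1 / (((n:ℝ)+1)*((n:ℝ)+2)) := by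
  obtain _ | m := n
  · have h0 : ∀ z : ℂ,
        ‖((Real.sqrt (((0:ℕ) + 1 : ℝ) / Real.pi) : ℂ) * z ^ (0:ℕ) * (starRingEnd ℂ) z -
          (((0:ℕ) : ℂ) / (Real.sqrt (((0:ℕ) + 1 : ℝ) * Real.pi) : ℂ)) * z ^ ((0:ℕ) - 1))‖ ^ 2
        = Real.sqrt (1 / Real.pi) ^ 2 * ‖z‖ ^ 2 := by
      intro z
      simp [mul_pow, map_mul, Complex.norm_conj, Complex.norm_real,
        _root_.abs_of_nonneg (Real.sqrt_nonneg _)]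
    simp only [h0]
    rw [MeasureTheory.integral_const_mul, ball_monomial_integral 2,
      Real.sq_sqrt (by positivity : (0:ℝ) ≤ 1 / Real.pi)]
    push_cast
    field_simp
    ring
  · have hcast : ((m + 1 : ℕ) : ℝ) + 1 = (m:ℝ) + 1 + 1 := by push_cast; ring
    have hcast2 : ((m + 1 : ℕ) : ℂ) = (m:ℂ) + 1 := by push_cast; ring
    simp only [hcast, hcast2, Nat.add_sub_cancel]
    simp_rw [pointwise_eq]
    set a : ℝ := Real.sqrt (((m:ℝ) + 1 + 1) / Real.pi)
    set s : ℝ := Real.sqrt (((m:ℝ) + 1 + 1) * Real.pi)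
    rw [integral_split]
    have ha2 : a^2 = ((m:ℝ) + 1 + 1) / Real.pi :=
      Real.sq_sqrt (by positivity)
    have hs2 : s^2 = ((m:ℝ) + 1 + 1) * Real.pi :=
      Real.sq_sqrt (by positivity)
    have hs0 : s ≠ 0 := by
      rw [show s = Real.sqrt (((m:ℝ) + 1 + 1) * Real.pi) from rfl]
      positivity
    have has : a / s = 1 / Real.pi := by
      have : a / s = Real.sqrt ((((m:ℝ) + 1 + 1) / Real.pi) / (((m:ℝ) + 1 + 1) * Real.pi)) :=
        (Real.sqrt_div (by positivity) _).symm
      rw [this, show (((m:ℝ) + 1 + 1) / Real.pi) / (((m:ℝ) + 1 + 1) * Real.pi)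
          = (1 / Real.pi)^2 from by field_simp,
        Real.sqrt_sq (by positivity)]
    have hab : a * (((m:ℝ)+1) / s) = ((m:ℝ)+1) / Real.pi := by
      rw [show a * (((m:ℝ)+1) / s) = ((m:ℝ)+1) * (a / s) from by ring, has]
      ring
    have hb2 : (((m:ℝ)+1) / s)^2 = ((m:ℝ)+1)^2 / (((m:ℝ) + 1 + 1) * Real.pi) := by
      rw [div_pow, hs2]
    rw [hab, hb2, ha2]
    have hpi := Real.pi_ne_zero
    push_cast
    field_simp
    ring

lemma telescope_hasSum : HasSum (fun n : ℕ => 1 / (((n:ℝ)+1)*((n:ℝ)+2))) 1 := by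
  rw [hasSum_iff_tendsto_nat_of_nonneg (fun n => by positivity)]
  have hps : ∀ N : ℕ, ∑ i ∈ Finset.range N, 1/(((i:ℝ)+1)*((i:ℝ)+2)) = 1 - 1/((N:ℝ)+1) := by
    intro N
    calc ∑ i ∈ Finset.range N, 1/(((i:ℝ)+1)*((i:ℝ)+2))
        = ∑ i ∈ Finset.range N,
            ((fun n : ℕ => 1/((n:ℝ)+1)) i - (fun n : ℕ => 1/((n:ℝ)+1)) (i+1)) :=
          Finset.sum_congr rfl (fun i _ => by
            push_cast
            rw [div_sub_div _ _ (by positivity : ((i:ℝ)+1) ≠ 0)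
                (by positivity : ((i:ℝ)+1+1) ≠ 0),
              div_eq_div_iff (by positivity) (by positivity)]
            ring)
      _ = (fun n : ℕ => 1/((n:ℝ)+1)) 0 - (fun n : ℕ => 1/((n:ℝ)+1)) N :=
          Finset.sum_range_sub' _ N
      _ = 1 - 1/((N:ℝ)+1) := by norm_num
  simp_rw [hps]
  have h := (tendsto_const_nhds (x := (1:ℝ)) (f := (Filter.atTop : Filter ℕ))).sub
    tendsto_one_div_add_atTop_nhds_zero_nat
  simpa using h

/-- The series `∑ₙ ∫_𝔻 |√((n+1)/π)·zⁿ·conj z − (n/√((n+1)π))·z^{n−1}|² dλ(z)` of squared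
`L²`-norms of the images of the orthonormal basis elements `uₙ dz̄` under the canonical
solution operator to `∂̄` converges, with value `∑ₙ 1/((n+1)(n+2)) = 1`; hence the canonical
solution operator restricted to `(0,1)`-forms with holomorphic coefficients on the unit
disc is Hilbert–Schmidt. -/
theorem summable_norm_sq_canonical_solution_disc :
    Summable (fun n : ℕ =>
      ∫ z in Metric.ball (0 : ℂ) 1,
        ‖((Real.sqrt (((n : ℝ) + 1) / Real.pi) : ℂ) * z ^ n * (starRingEnd ℂ) z -
          ((n : ℂ) / (Real.sqrt (((n : ℝ) + 1) * Real.pi) : ℂ)) * z ^ (n - 1))‖ ^ 2) ∧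
    ∑' n : ℕ,
      (∫ z in Metric.ball (0 : ℂ) 1,
        ‖((Real.sqrt (((n : ℝ) + 1) / Real.pi) : ℂ) * z ^ n * (starRingEnd ℂ) z -
          ((n : ℂ) / (Real.sqrt (((n : ℝ) + 1) * Real.pi) : ℂ)) * z ^ (n - 1))‖ ^ 2) = 1 := by
  have hfun : (fun n : ℕ =>
      ∫ z in Metric.ball (0 : ℂ) 1,
        ‖((Real.sqrt (((n : ℝ) + 1) / Real.pi) : ℂ) * z ^ n * (starRingEnd ℂ) z -
          ((n : ℂ) / (Real.sqrt (((n : ℝ) + 1) * Real.pi) : ℂ)) * z ^ (n - 1))‖ ^ 2)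
      = fun n : ℕ => 1 / (((n:ℝ)+1)*((n:ℝ)+2)) := funext integral_value
  rw [hfun]
  exact ⟨telescope_hasSum.summable, telescope_hasSum.tsum_eq⟩
end

section
/- For natural numbers m ≠ n, the functions z ↦ z^m·conj(z) − (m/(m+1))·z^{m−1} and z ↦ zⁿ·conj(z) − (n/(n+1))·z^{n−1} are orthogonal in L²(𝔻, λ): ∫_𝔻 (z^m·conj(z) − (m/(m+1)) z^{m−1})·conj( zⁿ·conj(z) − (n/(n+1)) z^{n−1} ) dλ(z) = 0. -/
open MeasureTheory Complex

lemma integ (a b : ℕ) :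
    IntegrableOn (fun z : ℂ => z ^ a * (starRingEnd ℂ) z ^ b) (Metric.ball (0 : ℂ) 1) := by
  have hc : Continuous (fun z : ℂ => z ^ a * (starRingEnd ℂ) z ^ b) :=
    (continuous_pow a).mul (Complex.continuous_conj.pow b)
  exact (hc.continuousOn.integrableOn_compact (isCompact_closedBall 0 1)).mono_set
    Metric.ball_subset_closedBall


lemma key (a b : ℕ) (h : a ≠ b) :
    ∫ z in Metric.ball (0 : ℂ) 1, z ^ a * (starRingEnd ℂ) z ^ b = 0 := by
  set I := ∫ z in Metric.ball (0 : ℂ) 1, z ^ a * (starRingEnd ℂ) z ^ b with hI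
  set θ : ℝ := Real.pi / ((a : ℝ) - b)
  set c : Circle := Circle.exp θ
  have hmp := (rotation c).measurePreserving
  have hemb : MeasurableEmbedding (rotation c) :=
    (rotation c).toHomeomorph.measurableEmbedding
  have himg : (rotation c) '' Metric.ball (0 : ℂ) 1 = Metric.ball (0 : ℂ) 1 := by
    rw [LinearIsometryEquiv.image_eq_preimage_symm]
    ext z
    simp [Metric.mem_ball, dist_zero_right]
  have h1 := hmp.setIntegral_image_emb hemb
    (fun z => z ^ a * (starRingEnd ℂ) z ^ b) (Metric.ball (0 : ℂ) 1)
  rw [himg] at h1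
  have hab : ((a : ℂ) - b) ≠ 0 := sub_ne_zero.mpr (by exact_mod_cast h)
  have hc : (c : ℂ) ^ a * (starRingEnd ℂ) (c : ℂ) ^ b = -1 := by
    have hce : (c : ℂ) = Complex.exp (θ * Complex.I) := by
      simp [c, Circle.coe_exp]
    rw [hce, ← Complex.exp_conj]
    simp only [map_mul, Complex.conj_I, Complex.conj_ofReal]
    rw [← Complex.exp_nat_mul, ← Complex.exp_nat_mul, ← Complex.exp_add]
    have hθ : (θ : ℂ) = (Real.pi : ℂ) / ((a : ℂ) - b) := by
      simp [θ]
    have : (a : ℂ) * (θ * Complex.I) + b * (θ * -Complex.I) = Real.pi * Complex.I := by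
      rw [hθ]; field_simp; ring
    rw [this, Complex.exp_pi_mul_I]
  have h2 : ∀ z : ℂ, (rotation c z) ^ a * (starRingEnd ℂ) (rotation c z) ^ b
      = - (z ^ a * (starRingEnd ℂ) z ^ b) := by
    intro z
    rw [rotation_apply]
    simp only [map_mul, mul_pow]
    calc (c:ℂ) ^ a * z ^ a * ((starRingEnd ℂ) (c:ℂ) ^ b * (starRingEnd ℂ) z ^ b)
        = ((c:ℂ) ^ a * (starRingEnd ℂ) (c:ℂ) ^ b) * (z ^ a * (starRingEnd ℂ) z ^ b) := by ring
      _ = - (z ^ a * (starRingEnd ℂ) z ^ b) := by rw [hc]; ring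
  simp only [h2, integral_neg] at h1
  rw [hI]
  show (∫ y in Metric.ball (0:ℂ) 1, y ^ a * (starRingEnd ℂ) y ^ b ∂volume) = 0
  linear_combination (1/2 : ℂ) * h1

/-- For `m ≠ n`, the images `z ↦ z^m·conj z − (m/(m+1))·z^{m−1}` and
`z ↦ zⁿ·conj z − (n/(n+1))·z^{n−1}` of the basis monomials under the canonical solution
operator are orthogonal in `L²(𝔻)`. -/
theorem canonical_solution_images_orthogonal (m n : ℕ) (hmn : m ≠ n) :
    ∫ z in Metric.ball (0 : ℂ) 1,
      (z ^ m * (starRingEnd ℂ) z - ((m : ℂ) / ((m : ℂ) + 1)) * z ^ (m - 1)) *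
      (starRingEnd ℂ) (z ^ n * (starRingEnd ℂ) z - ((n : ℂ) / ((n : ℂ) + 1)) * z ^ (n - 1))
      = 0 := by
  set A : ℂ := (m : ℂ) / ((m : ℂ) + 1) with hA
  set B : ℂ := (n : ℂ) / ((n : ℂ) + 1) with hB
  have hconjB : (starRingEnd ℂ) B = B := by
    simp [hB, map_div₀]
  have hfun : ∀ z : ℂ,
      (z ^ m * (starRingEnd ℂ) z - A * z ^ (m - 1)) *
        (starRingEnd ℂ) (z ^ n * (starRingEnd ℂ) z - B * z ^ (n - 1))
      = (z ^ (m + 1) * (starRingEnd ℂ) z ^ (n + 1)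
          - B * (z ^ m * (starRingEnd ℂ) z ^ ((n - 1) + 1)))
          - A * (z ^ ((m - 1) + 1) * (starRingEnd ℂ) z ^ n)
          + (A * B) * (z ^ (m - 1) * (starRingEnd ℂ) z ^ (n - 1)) := by
    intro z
    simp only [map_sub, map_mul, map_pow, Complex.conj_conj, hconjB]
    ring
  simp only [hfun]
  have i1 := integ (m + 1) (n + 1)
  have i2 := (integ m ((n - 1) + 1)).const_mul B
  have i3 := (integ ((m - 1) + 1) n).const_mul A
  have i4 := (integ (m - 1) (n - 1)).const_mul (A * B)
  have i12 : Integrable (fun z : ℂ => z ^ (m + 1) * (starRingEnd ℂ) z ^ (n + 1)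
      - B * (z ^ m * (starRingEnd ℂ) z ^ ((n - 1) + 1)))
      (volume.restrict (Metric.ball (0 : ℂ) 1)) := i1.sub i2
  have i123 : Integrable (fun z : ℂ => z ^ (m + 1) * (starRingEnd ℂ) z ^ (n + 1)
      - B * (z ^ m * (starRingEnd ℂ) z ^ ((n - 1) + 1))
      - A * (z ^ ((m - 1) + 1) * (starRingEnd ℂ) z ^ n))
      (volume.restrict (Metric.ball (0 : ℂ) 1)) := i12.sub i3
  rw [integral_add i123 i4, integral_sub i12 i3, integral_sub i1 i2,
    integral_const_mul, integral_const_mul, integral_const_mul]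
  have h1 : ∫ z in Metric.ball (0 : ℂ) 1, z ^ (m + 1) * (starRingEnd ℂ) z ^ (n + 1) = 0 :=
    key (m + 1) (n + 1) (by omega)
  have h2 : B * ∫ z in Metric.ball (0 : ℂ) 1, z ^ m * (starRingEnd ℂ) z ^ ((n - 1) + 1) = 0 := by
    rcases Nat.eq_zero_or_pos n with hn | hn
    · simp [hB, hn]
    · rw [Nat.sub_add_cancel hn, key m n hmn, mul_zero]
  have h3 : A * ∫ z in Metric.ball (0 : ℂ) 1, z ^ ((m - 1) + 1) * (starRingEnd ℂ) z ^ n = 0 := by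
    rcases Nat.eq_zero_or_pos m with hm | hm
    · simp [hA, hm]
    · rw [Nat.sub_add_cancel hm, key m n hmn, mul_zero]
  have h4 : (A * B) * ∫ z in Metric.ball (0 : ℂ) 1,
      z ^ (m - 1) * (starRingEnd ℂ) z ^ (n - 1) = 0 := by
    rcases Nat.eq_zero_or_pos m with hm | hm
    · simp [hA, hm]
    rcases Nat.eq_zero_or_pos n with hn | hn
    · simp [hB, hn]
    rw [key (m - 1) (n - 1) (by omega), mul_zero]
  rw [h1, h2, h3, h4]
  ring
end

section
/- The double series over all pairs (n₁, n₂) ∈ ℕ² of the quantity ((n₁+1)(n₂+1)/π²)·( ∫_{𝔻²} |conj(z₁) z₁^{n₁} z₂^{n₂} − (n₁/(n₁+1)) z₁^{n₁−1} z₂^{n₂}|² dλ + ∫_{𝔻²} |conj(z₂) z₁^{n₁} z₂^{n₂} − (n₂/(n₂+1)) z₁^{n₁} z₂^{n₂−1}|² dλ ) diverges to infinity; equivalently ∑_{(n₁,n₂)∈ℕ²} ( 1/((n₁+1)(n₁+2)) + 1/((n₂+1)(n₂+2)) ) = ∞. Consequently the canonical solution operator to ∂̄, S₁ : A²_{(0,1)}(𝔻²)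 → L²(𝔻²), is not a Hilbert–Schmidt operator. -/
open MeasureTheory Real Set

lemma ball_abs_pow_integral (m : ℕ) :
    ∫ z in Metric.ball (0 : ℂ) 1, ‖z‖ ^ m = 2 * π / (m + 2) := by
  rw [← integral_indicator (measurableSet_ball), ← Complex.integral_comp_polarCoord_symm,
    polarCoord_target]
  have hcongr : ∀ p ∈ Ioi (0:ℝ) ×ˢ Ioo (-π) π,
      p.1 • Set.indicator (Metric.ball (0:ℂ) 1) (fun z => ‖z‖ ^ m)
        (Complex.polarCoord.symm p)
      = Set.indicator (Ioo (0:ℝ) 1) (fun r => r ^ (m+1)) p.1 * (1:ℝ) := by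
    rintro ⟨r, θ⟩ ⟨hr, hθ⟩
    simp only [mem_Ioi] at hr
    have habs : ‖Complex.polarCoord.symm (r, θ)‖ = r := by
      rw [Complex.norm_polarCoord_symm]; exact abs_of_pos hr
    by_cases h1 : r < 1
    · rw [Set.indicator_of_mem, Set.indicator_of_mem]
      · simp only [smul_eq_mul, habs, mul_one, pow_succ]; ring
      · exact ⟨hr, h1⟩
      · rw [Metric.mem_ball, dist_zero_right, habs]; exact h1
    · rw [Set.indicator_of_notMem, Set.indicator_of_notMem]
      · simp
      · exact fun hmem => h1 hmem.2
      · intro hmem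
        rw [Metric.mem_ball, dist_zero_right, habs] at hmem
        exact h1 hmem
  rw [setIntegral_congr_fun (measurableSet_Ioi.prod measurableSet_Ioo) hcongr,
    Measure.volume_eq_prod,
    setIntegral_prod_mul (fun r : ℝ => (Ioo (0:ℝ) 1).indicator (fun r => r ^ (m+1)) r)
      (fun _ : ℝ => (1:ℝ))]
  have h1 : ∫ r in Ioi (0:ℝ), Set.indicator (Ioo (0:ℝ) 1) (fun r => r ^ (m+1)) r
      = 1 / (m + 2) := by
    rw [setIntegral_indicator measurableSet_Ioo]
    have : Ioi (0:ℝ) ∩ Ioo 0 1 = Ioo 0 1 := by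
      ext x; simp (config := {contextual := true}) [mem_Ioo, and_assoc]
    rw [this, ← integral_Ioc_eq_integral_Ioo, ← intervalIntegral.integral_of_le (by norm_num),
      integral_pow]
    push_cast; norm_num; ring
  have h2 : ∫ _ in Ioo (-π) π, (1:ℝ) = 2 * π := by
    rw [setIntegral_const, measureReal_def, Real.volume_Ioo, smul_eq_mul, mul_one,
      ENNReal.toReal_ofReal (by linarith [Real.pi_pos] : (0:ℝ) ≤ π - -π)]
    ring
  rw [h1, h2]
  ring

/-- The sum over all `(n₁,n₂) ∈ ℕ²` of the squared `L²(𝔻²)`-norms of the images of the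
orthonormal basis elements `u_{n₁,n₂} dz̄₁`, `u_{n₁,n₂} dz̄₂` of `A²₍₀,₁₎(𝔻²)` under the
canonical solution operator to `∂̄` diverges; equivalently
`∑_{(n₁,n₂)} (1/((n₁+1)(n₁+2)) + 1/((n₂+1)(n₂+2))) = ∞`. Consequently the canonical
solution operator `S₁ : A²₍₀,₁₎(𝔻²) → L²(𝔻²)` is not Hilbert–Schmidt. -/
theorem not_summable_norm_sq_canonical_solution_bidisc :
    ¬ Summable (fun p : ℕ × ℕ =>
      (((p.1 : ℝ) + 1) * ((p.2 : ℝ) + 1) / Real.pi ^ 2) *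
        ((∫ z in Metric.ball (0 : ℂ) 1 ×ˢ Metric.ball (0 : ℂ) 1,
            ‖(starRingEnd ℂ) z.1 * z.1 ^ p.1 * z.2 ^ p.2 -
              ((p.1 : ℂ) / ((p.1 : ℂ) + 1)) * z.1 ^ (p.1 - 1) * z.2 ^ p.2‖ ^ 2) +
         (∫ z in Metric.ball (0 : ℂ) 1 ×ˢ Metric.ball (0 : ℂ) 1,
            ‖(starRingEnd ℂ) z.2 * z.1 ^ p.1 * z.2 ^ p.2 -
              ((p.2 : ℂ) / ((p.2 : ℂ) + 1)) * z.1 ^ p.1 * z.2 ^ (p.2 - 1)‖ ^ 2))) ∧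
    ¬ Summable (fun p : ℕ × ℕ =>
      1 / (((p.1 : ℝ) + 1) * ((p.1 : ℝ) + 2)) + 1 / (((p.2 : ℝ) + 1) * ((p.2 : ℝ) + 2))) := by
  have key : ∀ (f : ℕ × ℕ → ℝ), (∀ n : ℕ, (1:ℝ)/2 ≤ f (0, n)) → ¬ Summable f := by
    intro f hf hs
    have hinj : Function.Injective (fun n : ℕ => ((0, n) : ℕ × ℕ)) := by
      intro a b hab; simpa using hab
    have h2 : Summable (fun n : ℕ => f (0, n)) := hs.comp_injective hinj
    have h3 := h2.tendsto_atTop_zero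
    have h4 := h3.eventually (gt_mem_nhds (by norm_num : (0:ℝ) < 1/2))
    obtain ⟨n, hn⟩ := h4.exists
    exact absurd (hf n) (not_le.mpr hn)
  constructor
  · apply key
    intro n
    have hI1 : (∫ z in Metric.ball (0 : ℂ) 1 ×ˢ Metric.ball (0 : ℂ) 1,
        ‖(starRingEnd ℂ) z.1 * z.1 ^ (0:ℕ) * z.2 ^ n -
          (((0:ℕ) : ℂ) / (((0:ℕ) : ℂ) + 1)) * z.1 ^ ((0:ℕ) - 1) * z.2 ^ n‖ ^ 2)
        = (2 * π / 4) * (2 * π / (2 * n + 2)) := by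
      have heq : ∀ z : ℂ × ℂ,
          ‖(starRingEnd ℂ) z.1 * z.1 ^ (0:ℕ) * z.2 ^ n -
            (((0:ℕ) : ℂ) / (((0:ℕ) : ℂ) + 1)) * z.1 ^ ((0:ℕ) - 1) * z.2 ^ n‖ ^ 2
          = ‖z.1‖ ^ 2 * ‖z.2‖ ^ (2 * n) := by
        intro z
        simp only [Nat.cast_zero, zero_div, zero_mul, pow_zero, mul_one, sub_zero]
        rw [norm_mul, mul_pow, norm_pow, ← pow_mul, Complex.norm_conj, mul_comm n 2]
      simp only [heq]
      rw [Measure.volume_eq_prod, setIntegral_prod_mul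
        (fun z : ℂ => ‖z‖ ^ 2) (fun z : ℂ => ‖z‖ ^ (2*n)),
        ball_abs_pow_integral, ball_abs_pow_integral]
      push_cast; norm_num
    have hI2 : 0 ≤ ∫ z in Metric.ball (0 : ℂ) 1 ×ˢ Metric.ball (0 : ℂ) 1,
        ‖(starRingEnd ℂ) z.2 * z.1 ^ (0:ℕ) * z.2 ^ n -
          ((n : ℂ) / ((n : ℂ) + 1)) * z.1 ^ (0:ℕ) * z.2 ^ (n - 1)‖ ^ 2 :=
      integral_nonneg fun z => by positivity
    simp only
    rw [hI1]
    have hπ : (0:ℝ) < π := Real.pi_pos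
    have hn1 : (0:ℝ) < (n:ℝ) + 1 := by positivity
    have hmain : (((0:ℕ):ℝ) + 1) * ((n:ℝ) + 1) / π ^ 2 * (2 * π / 4 * (2 * π / (2 * n + 2)))
        = 1/2 := by
      push_cast
      field_simp
      ring
    calc (1:ℝ)/2 = (((0:ℕ):ℝ) + 1) * ((n:ℝ) + 1) / π ^ 2 * (2 * π / 4 * (2 * π / (2 * n + 2))) :=
          hmain.symm
      _ ≤ _ := by
          apply mul_le_mul_of_nonneg_left (le_add_of_nonneg_right hI2)
          positivity
  · apply key
    intro n
    simp only [Nat.cast_zero]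
    have h2 : (0:ℝ) ≤ 1 / (((n:ℝ) + 1) * ((n:ℝ) + 2)) := by positivity
    have h3 : 1 / (((0:ℝ) + 1) * ((0:ℝ) + 2)) = 1/2 := by norm_num
    linarith
end

section
/- The double series over all pairs (n₁, n₂) ∈ ℕ² of ((n₂+2) + (n₁+2))/((n₁+n₂+2)(n₁+n₂+3)) diverges to infinity; equivalently, the sum over the orthonormal basis { U_{n₁,n₂} dz̄₁, U_{n₁,n₂} dz̄₂ } of A²_{(0,1)}(𝔹²) of the squared L²(𝔹²)-norms of the images under the canonical solution operator to ∂̄, namely ∑_{(n₁,n₂)} ((n₁+n₂+2)!/(π² n₁! n₂!))·( ∫_{𝔹²} |conj(z₁) z₁^{n₁} z₂^{n₂} − (n₁/(n₁+n₂+2)) z₁^{n₁−1} z₂^{n₂}|² dλ + ∫_{𝔹²} |conj(z₂) z₁^{n₁} z₂^{n₂} − (n₂/(n₁+n₂+2)) z₁^{n₁} z₂^{n₂−1}|² dλ ) = ∞. Consequently the canonical solution operator to ∂̄, S₁ : A²_{(0,1)}(𝔹²) → L²(𝔹²), is not a Hilbert–Schmidt operator. -/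
open MeasureTheory Real
open scoped ENNReal NNReal

lemma annulus_vol (r R : ℝ) (h0 : 0 ≤ r) (h : r ≤ R) :
    volume (Metric.ball (0:ℂ) R \ Metric.ball 0 r) = ENNReal.ofReal (Real.pi * (R^2 - r^2)) := by
  have hpi : ((NNReal.pi : ℝ≥0∞)) = ENNReal.ofReal Real.pi := by
    rw [← NNReal.coe_real_pi]; exact ENNReal.ofReal_coe_nnreal.symm
  rw [measure_diff (Metric.ball_subset_ball h) measurableSet_ball.nullMeasurableSet
    measure_ball_lt_top.ne, Complex.volume_ball, Complex.volume_ball,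
    ← ENNReal.ofReal_pow (h0.trans h), ← ENNReal.ofReal_pow h0, hpi,
    ← ENNReal.ofReal_mul (by positivity), ← ENNReal.ofReal_mul (by positivity),
    ← ENNReal.ofReal_sub _ (by positivity)]
  ring_nf


lemma aux_harmonic : ¬ Summable (fun n : ℕ => 1 / ((n:ℝ) + 3)) := by
  intro h
  have h2 : Summable (fun n : ℕ => 1 / ((n:ℝ))) := by
    refine (summable_nat_add_iff 3).mp ?_
    convert h using 2 with n
    · rfl
    push_cast; ring
  exact Real.not_summable_one_div_natCast (by simpa using h2)

lemma aux_exp (n : ℕ) : (1:ℝ)/9 ≤ (((n:ℝ)+1)/((n:ℝ)+3))^n := by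
  have h1 : (0:ℝ) < (n:ℝ)+1 := by positivity
  have h3 : (0:ℝ) < (n:ℝ)+3 := by positivity
  have key : (((n:ℝ)+3)/((n:ℝ)+1))^n ≤ 9 := by
    have he : ((n:ℝ)+3)/((n:ℝ)+1) = 1 + 2/((n:ℝ)+1) := by field_simp; ring
    rw [he]
    have e9 : Real.exp 2 ≤ 9 := by
      have h := Real.exp_one_lt_d9
      have h2 : Real.exp 2 = Real.exp 1 * Real.exp 1 := by
        rw [← Real.exp_add]; norm_num
      nlinarith [Real.exp_pos 1]
    calc (1 + 2/((n:ℝ)+1))^n ≤ (Real.exp (2/((n:ℝ)+1)))^n := by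
          apply pow_le_pow_left₀ (by positivity)
          linarith [Real.add_one_le_exp (2/((n:ℝ)+1))]
      _ = Real.exp (n * (2/((n:ℝ)+1))) := by rw [← Real.exp_nat_mul]
      _ ≤ Real.exp 2 := by
          apply Real.exp_le_exp.mpr
          rw [mul_div_assoc', div_le_iff₀ h1]
          nlinarith [Nat.cast_nonneg (α := ℝ) n]
      _ ≤ 9 := e9
  have hpos : (0:ℝ) < (((n:ℝ)+3)/((n:ℝ)+1))^n := by positivity
  have heq : (((n:ℝ)+1)/((n:ℝ)+3))^n = 1 / ((((n:ℝ)+3)/((n:ℝ)+1))^n) := by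
    rw [one_div, ← inv_pow, inv_div]
  rw [heq]
  exact one_div_le_one_div_of_le hpos key


lemma integ_lb (n : ℕ) :
    Real.pi ^ 2 / (36 * ((n:ℝ)+3)^3) ≤
    ∫ z in {z : ℂ × ℂ | ‖z.1‖ ^ 2 + ‖z.2‖ ^ 2 < 1},
      ‖((starRingEnd ℂ) z.2 * z.1 ^ n)‖ ^ 2 := by
  have hs : (0:ℝ) < (n:ℝ)+3 := by positivity
  set s : ℝ := (n:ℝ)+3 with hs_def
  set a' : ℝ := ((n:ℝ)+1)/s with ha'_def
  set a : ℝ := ((n:ℝ)+2)/s with ha_def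
  set b' : ℝ := 1/(2*s) with hb'_def
  set b : ℝ := 1/s with hb_def
  have ha'0 : 0 ≤ a' := by positivity
  have hb'0 : 0 ≤ b' := by positivity
  have ha'a : a' ≤ a := by rw [ha'_def, ha_def, div_le_div_iff₀ hs hs]; nlinarith
  have hb'b : b' ≤ b := by rw [hb'_def, hb_def, div_le_div_iff₀ (by positivity) hs]; nlinarith
  set A1 : Set ℂ := Metric.ball 0 (Real.sqrt a) \ Metric.ball 0 (Real.sqrt a') with hA1
  set A2 : Set ℂ := Metric.ball 0 (Real.sqrt b) \ Metric.ball 0 (Real.sqrt b') with hA2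
  set B : Set (ℂ × ℂ) := {z : ℂ × ℂ | ‖z.1‖ ^ 2 + ‖z.2‖ ^ 2 < 1} with hB
  set g : ℂ × ℂ → ℝ := fun z => ‖((starRingEnd ℂ) z.2 * z.1 ^ n)‖ ^ 2 with hg
  have hmem : ∀ (w : ℂ) (r : ℝ), w ∈ Metric.ball (0:ℂ) r ↔ ‖w‖ < r := by
    intro w r; rw [Metric.mem_ball, Complex.dist_eq, sub_zero]
  -- B is measurable and of finite volume
  have hBmeas : MeasurableSet B := by
    refine (isOpen_lt ?_ continuous_const).measurableSet
    exact ((continuous_norm.comp continuous_fst).pow 2).add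
      ((continuous_norm.comp continuous_snd).pow 2)
  have hBvol : volume B ≠ ⊤ := by
    refine ((measure_mono (fun z hz => ?_)).trans_lt
      (measure_ball_lt_top (x := (0 : ℂ × ℂ)) (r := 2))).ne
    have h1 := norm_nonneg z.1
    have h2 := norm_nonneg z.2
    have hz' : ‖z.1‖ ^ 2 + ‖z.2‖ ^ 2 < 1 := hz
    simp only [Metric.mem_ball, Prod.dist_eq, max_lt_iff, Complex.dist_eq, Prod.fst_zero,
      Prod.snd_zero, sub_zero]
    constructor <;> nlinarith
  -- g is integrable on B
  have hgcont : Continuous g := by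
    apply Continuous.pow
    exact continuous_norm.comp ((continuous_star.comp continuous_snd).mul
      ((continuous_fst).pow n))
  have hgint : IntegrableOn g B volume := by
    refine Measure.integrableOn_of_bounded hBvol hgcont.aestronglyMeasurable (M := 1) ?_
    rw [ae_restrict_iff' hBmeas]
    refine ae_of_all _ fun z hz => ?_
    have hz' : ‖z.1‖ ^ 2 + ‖z.2‖ ^ 2 < 1 := hz
    have h1 := norm_nonneg z.1
    have h2 := norm_nonneg z.2
    have e1 : ‖z.1‖ ≤ 1 := by nlinarith
    have e2 : ‖z.2‖ ≤ 1 := by nlinarith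
    rw [Real.norm_eq_abs, abs_of_nonneg (by positivity)]
    rw [hg]
    simp only [norm_mul, norm_pow, Complex.norm_conj]
    exact pow_le_one₀ (by positivity) (mul_le_one₀ e2 (by positivity) (pow_le_one₀ h1 e1))
  -- the product annulus D
  have hDmeas : MeasurableSet (A1 ×ˢ A2) :=
    (measurableSet_ball.diff measurableSet_ball).prod
      (measurableSet_ball.diff measurableSet_ball)
  have hsq : ∀ x : ℝ, 0 ≤ x → Real.sqrt x ^ 2 = x := fun x hx => Real.sq_sqrt hx
  have hDsub : A1 ×ˢ A2 ⊆ B := by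
    rintro z ⟨hz1, hz2⟩
    have k1 : ‖z.1‖ < Real.sqrt a := (hmem _ _).mp hz1.1
    have k2 : ‖z.2‖ < Real.sqrt b := (hmem _ _).mp hz2.1
    have q1 : ‖z.1‖ ^ 2 < a := by
      calc ‖z.1‖ ^ 2 < Real.sqrt a ^ 2 :=
            pow_lt_pow_left₀ k1 (norm_nonneg _) (by norm_num)
        _ = a := hsq a (ha'0.trans ha'a)
    have q2 : ‖z.2‖ ^ 2 < b := by
      calc ‖z.2‖ ^ 2 < Real.sqrt b ^ 2 :=
            pow_lt_pow_left₀ k2 (norm_nonneg _) (by norm_num)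
        _ = b := hsq b (hb'0.trans hb'b)
    show ‖z.1‖ ^ 2 + ‖z.2‖ ^ 2 < 1
    have hab : a + b = 1 := by rw [ha_def, hb_def, hs_def]; field_simp; ring
    linarith
  -- lower bound for g on D
  have hglow : ∀ z ∈ A1 ×ˢ A2, b' * a' ^ n ≤ g z := by
    rintro z ⟨hz1, hz2⟩
    have k1 : Real.sqrt a' ≤ ‖z.1‖ := not_lt.mp (fun hc => hz1.2 ((hmem _ _).mpr hc))
    have k2 : Real.sqrt b' ≤ ‖z.2‖ := not_lt.mp (fun hc => hz2.2 ((hmem _ _).mpr hc))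
    have q1 : a' ≤ ‖z.1‖ ^ 2 := by
      calc a' = Real.sqrt a' ^ 2 := (hsq a' ha'0).symm
        _ ≤ ‖z.1‖ ^ 2 := pow_le_pow_left₀ (Real.sqrt_nonneg _) k1 2
    have q2 : b' ≤ ‖z.2‖ ^ 2 := by
      calc b' = Real.sqrt b' ^ 2 := (hsq b' hb'0).symm
        _ ≤ ‖z.2‖ ^ 2 := pow_le_pow_left₀ (Real.sqrt_nonneg _) k2 2
    rw [hg]
    simp only [norm_mul, norm_pow, Complex.norm_conj]
    calc b' * a' ^ n ≤ ‖z.2‖ ^ 2 * (‖z.1‖ ^ 2) ^ n := by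
          exact mul_le_mul q2 (pow_le_pow_left₀ ha'0 q1 n) (by positivity) (by positivity)
      _ = (‖z.2‖ * ‖z.1‖ ^ n) ^ 2 := by ring
  -- volume of D
  have hvolD : volume (A1 ×ˢ A2) = ENNReal.ofReal (Real.pi * (a - a') * (Real.pi * (b - b'))) := by
    rw [Measure.volume_eq_prod, Measure.prod_prod, hA1, hA2,
      annulus_vol _ _ (Real.sqrt_nonneg _) (Real.sqrt_le_sqrt ha'a),
      annulus_vol _ _ (Real.sqrt_nonneg _) (Real.sqrt_le_sqrt hb'b),
      hsq a (ha'0.trans ha'a), hsq a' ha'0, hsq b (hb'0.trans hb'b), hsq b' hb'0,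
      ← ENNReal.ofReal_mul (mul_nonneg Real.pi_pos.le (by linarith))]
  have hvolDne : volume (A1 ×ˢ A2) ≠ ⊤ := by rw [hvolD]; exact ENNReal.ofReal_ne_top
  have hvolDval : (volume (A1 ×ˢ A2)).toReal = Real.pi ^ 2 / (2 * s ^ 2) := by
    rw [hvolD, ENNReal.toReal_ofReal (mul_nonneg (mul_nonneg Real.pi_pos.le (by linarith))
      (mul_nonneg Real.pi_pos.le (by linarith)))]
    have e1 : a - a' = 1/s := by rw [ha_def, ha'_def]; field_simp; ring
    have e2 : b - b' = 1/(2*s) := by rw [hb_def, hb'_def]; field_simp; ring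
    rw [e1, e2]; field_simp
  -- assemble
  calc Real.pi ^ 2 / (36 * s ^ 3)
      = (b' * (1/9)) * (Real.pi ^ 2 / (2 * s ^ 2)) := by rw [hb'_def]; field_simp; ring
    _ ≤ (b' * a' ^ n) * (Real.pi ^ 2 / (2 * s ^ 2)) := by
        have h9 : (1:ℝ)/9 ≤ a' ^ n := by rw [ha'_def, hs_def]; exact aux_exp n
        gcongr
    _ = (b' * a' ^ n) * (volume (A1 ×ˢ A2)).toReal := by rw [hvolDval]
    _ ≤ ∫ z in A1 ×ˢ A2, g z :=
        by
          have := setIntegral_ge_of_const_le hDmeas hvolDne hglow (hgint.mono_set hDsub)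
          rw [smul_eq_mul, measureReal_def] at this
          linarith
    _ ≤ ∫ z in B, g z :=
        setIntegral_mono_set hgint (ae_of_all _ fun z => by positivity)
          (HasSubset.Subset.eventuallyLE hDsub)


lemma key_lb (n : ℕ) :
    1 / (216 * ((n:ℝ) + 3)) ≤
    ((Nat.factorial (n + 0 + 2) : ℝ) /
        (Real.pi ^ 2 * (Nat.factorial n) * (Nat.factorial 0))) *
      ((∫ z in {z : ℂ × ℂ | ‖z.1‖ ^ 2 + ‖z.2‖ ^ 2 < 1},
          ‖((starRingEnd ℂ) z.1 * z.1 ^ n * z.2 ^ 0 -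
            ((n : ℂ) / ((n : ℂ) + (0 : ℕ) + 2)) * z.1 ^ (n - 1) * z.2 ^ 0)‖ ^ 2) +
       (∫ z in {z : ℂ × ℂ | ‖z.1‖ ^ 2 + ‖z.2‖ ^ 2 < 1},
          ‖((starRingEnd ℂ) z.2 * z.1 ^ n * z.2 ^ 0 -
            (((0:ℕ) : ℂ) / ((n : ℂ) + (0 : ℕ) + 2)) * z.1 ^ n * z.2 ^ ((0:ℕ) - 1))‖ ^ 2)) := by
  have hπ := Real.pi_pos
  have hfpos : (0:ℝ) < (Nat.factorial n : ℝ) := by exact_mod_cast n.factorial_pos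
  have hs : (0:ℝ) < (n:ℝ) + 3 := by positivity
  simp only [Nat.cast_zero, zero_div, zero_mul, sub_zero, pow_zero, mul_one, add_zero,
    Nat.factorial_zero, Nat.cast_one]
  set C : ℝ := (Nat.factorial (n + 2) : ℝ) / (Real.pi ^ 2 * (Nat.factorial n)) with hC
  have hfact : ((Nat.factorial (n + 2) : ℝ)) = ((n:ℝ)+2)*((n:ℝ)+1)*(Nat.factorial n : ℝ) := by
    rw [show n + 2 = (n+1)+1 from rfl, Nat.factorial_succ, Nat.factorial_succ]
    push_cast; ring
  have hCpos : 0 ≤ C := by rw [hC]; positivity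
  have hI1 : 0 ≤ ∫ z in {z : ℂ × ℂ | ‖z.1‖ ^ 2 + ‖z.2‖ ^ 2 < 1},
      ‖((starRingEnd ℂ) z.1 * z.1 ^ n -
        ((n : ℂ) / ((n : ℂ) + 2)) * z.1 ^ (n - 1))‖ ^ 2 :=
    integral_nonneg fun z => by positivity
  have hI2 := integ_lb n
  calc 1 / (216 * ((n:ℝ) + 3))
      ≤ C * (Real.pi ^ 2 / (36 * ((n:ℝ)+3)^3)) := by
        have he : C * (Real.pi ^ 2 / (36 * ((n:ℝ)+3)^3))
            = ((n:ℝ)+2)*((n:ℝ)+1) / (36 * ((n:ℝ)+3)^3) := by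
          rw [hC, hfact]; field_simp
        rw [he, div_le_div_iff₀ (by positivity) (by positivity)]
        have hcube : (0:ℝ) ≤ ((n:ℝ)+3)*(5*(n:ℝ)^2+12*(n:ℝ)+3) := by positivity
        nlinarith [Nat.cast_nonneg (α := ℝ) n]
    _ ≤ C * (∫ z in {z : ℂ × ℂ | ‖z.1‖ ^ 2 + ‖z.2‖ ^ 2 < 1},
          ‖((starRingEnd ℂ) z.2 * z.1 ^ n)‖ ^ 2) :=
        mul_le_mul_of_nonneg_left hI2 hCpos
    _ ≤ _ := by
        refine mul_le_mul_of_nonneg_left ?_ hCpos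
        exact le_add_of_nonneg_left hI1

/-- The series `∑_{(n₁,n₂)∈ℕ²} ((n₂+2)+(n₁+2))/((n₁+n₂+2)(n₁+n₂+3))` diverges; equivalently,
the sum over the orthonormal basis `{U_{n₁,n₂} dz̄₁, U_{n₁,n₂} dz̄₂}` of `A²₍₀,₁₎(𝔹²)` of the
squared `L²(𝔹²)`-norms of the images under the canonical solution operator to `∂̄` is
infinite. Consequently the canonical solution operator `S₁ : A²₍₀,₁₎(𝔹²) → L²(𝔹²)` is not
Hilbert–Schmidt. -/
theorem not_summable_norm_sq_canonical_solution_ball :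
    ¬ Summable (fun p : ℕ × ℕ =>
      (((p.2 : ℝ) + 2) + ((p.1 : ℝ) + 2)) /
        ((((p.1 : ℝ) + (p.2 : ℝ)) + 2) * (((p.1 : ℝ) + (p.2 : ℝ)) + 3))) ∧
    ¬ Summable (fun p : ℕ × ℕ =>
      ((Nat.factorial (p.1 + p.2 + 2) : ℝ) /
          (Real.pi ^ 2 * (Nat.factorial p.1) * (Nat.factorial p.2))) *
        ((∫ z in {z : ℂ × ℂ | ‖z.1‖ ^ 2 + ‖z.2‖ ^ 2 < 1},
            ‖((starRingEnd ℂ) z.1 * z.1 ^ p.1 * z.2 ^ p.2 -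
              ((p.1 : ℂ) / ((p.1 : ℂ) + (p.2 : ℂ) + 2)) * z.1 ^ (p.1 - 1) * z.2 ^ p.2)‖ ^ 2) +
         (∫ z in {z : ℂ × ℂ | ‖z.1‖ ^ 2 + ‖z.2‖ ^ 2 < 1},
            ‖((starRingEnd ℂ) z.2 * z.1 ^ p.1 * z.2 ^ p.2 -
              ((p.2 : ℂ) / ((p.1 : ℂ) + (p.2 : ℂ) + 2)) * z.1 ^ p.1 * z.2 ^ (p.2 - 1))‖ ^ 2))) := by
  have hinj : Function.Injective (fun n : ℕ => ((n, 0) : ℕ × ℕ)) := by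
    intro m k h
    simpa using congrArg Prod.fst h
  constructor
  · intro h
    apply aux_harmonic
    have h0 := h.comp_injective hinj
    refine Summable.of_nonneg_of_le (fun n => by positivity) (fun n => ?_) h0
    simp only [Function.comp_apply, Nat.cast_zero, add_zero]
    rw [div_le_div_iff₀ (by positivity) (by positivity)]
    nlinarith [Nat.cast_nonneg (α := ℝ) n]
  · intro h
    have h0 := h.comp_injective hinj
    have hsum : Summable (fun n : ℕ => 1 / (216 * ((n:ℝ) + 3))) := by
      refine Summable.of_nonneg_of_le (fun n => by positivity) (fun n => ?_) h0
      simpa using key_lb n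
    apply aux_harmonic
    have heq : (fun n : ℕ => 1 / ((n:ℝ) + 3))
        = fun n : ℕ => 216 * (1 / (216 * ((n:ℝ) + 3))) := by
      funext n
      field_simp
    rw [heq]
    exact hsum.mul_left 216
end

section
/- The function K((z₁,z₂),(w₁,w₂)) = (|z₁−w₁|² + |z₂−w₂|²)/( |1 − z₁·conj(w₁)|⁴ · |1 − z₂·conj(w₂)|⁴ ) does not belong to L²(𝔻² × 𝔻²), i.e. ∫_{𝔻²×𝔻²} K(z,w)² dλ(z) dλ(w) = ∞. -/
open MeasureTheory

set_option maxHeartbeats 1000000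

/-- The kernel `K(z,w) = (|z₁−w₁|² + |z₂−w₂|²)/(|1 − z₁·conj w₁|⁴·|1 − z₂·conj w₂|⁴)` is not
square integrable over `𝔻² × 𝔻²`: the integral of `K²` over `𝔻² × 𝔻²` is infinite. -/
theorem bidisc_kernel_not_sq_integrable :
    ∫⁻ p in ((Metric.ball (0 : ℂ) 1 ×ˢ Metric.ball (0 : ℂ) 1) ×ˢ
        (Metric.ball (0 : ℂ) 1 ×ˢ Metric.ball (0 : ℂ) 1)),
      ENNReal.ofReal
        (((‖p.1.1 - p.2.1‖ ^ 2 + ‖p.1.2 - p.2.2‖ ^ 2) /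
          (‖1 - p.1.1 * (starRingEnd ℂ) p.2.1‖ ^ 4 *
            ‖1 - p.1.2 * (starRingEnd ℂ) p.2.2‖ ^ 4)) ^ 2) = ⊤ := by
  refine ENNReal.eq_top_of_forall_nnreal_le fun r => ?_
  have hr0 : (0:ℝ) ≤ (r:ℝ) := r.coe_nonneg
  set t : ℝ := min 1 (1 / (2 ^ 40 * ((r : ℝ) + 1))) with ht_def
  have htpos : 0 < t := lt_min one_pos (by positivity)
  have ht1 : t ≤ 1 := min_le_left _ _
  have ht2 : t ≤ 1/(2^40*((r:ℝ)+1)) := min_le_right _ _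
  clear_value t
  set B1 : Set ℂ := Metric.ball ((1 - t/2 : ℝ) : ℂ) (t/4) with hB1def
  set B2 : Set ℂ := Metric.ball (0 : ℂ) (1/8) with hB2def
  set B3 : Set ℂ := Metric.ball ((3/4 : ℝ) : ℂ) (1/8) with hB3def
  -- basic facts about points of B1
  have hB1 : ∀ z ∈ B1, ‖z‖ < 1 ∧ ‖1 - z‖ < t := by
    intro z hz
    rw [hB1def, Metric.mem_ball, Complex.dist_eq] at hz
    have hc : ‖((1 - t/2 : ℝ) : ℂ)‖ = 1 - t/2 := by
      rw [Complex.norm_real, Real.norm_of_nonneg (by linarith)]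
    constructor
    · have h1 : ‖z‖ ≤ ‖z - ((1 - t/2 : ℝ) : ℂ)‖ +
          ‖((1 - t/2 : ℝ) : ℂ)‖ := by
        simpa using norm_add_le (z - ((1 - t/2 : ℝ) : ℂ)) (((1 - t/2 : ℝ) : ℂ))
      rw [hc] at h1; linarith
    · have he : (1 : ℂ) - z = ((t/2 : ℝ) : ℂ) + (((1 - t/2 : ℝ) : ℂ) - z) := by
        push_cast; ring
      have h1 : ‖(1:ℂ) - z‖ ≤ ‖((t/2 : ℝ) : ℂ)‖ +
          ‖((1 - t/2 : ℝ) : ℂ) - z‖ := by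
        rw [he]; exact norm_add_le _ _
      have h2 : ‖((t/2 : ℝ) : ℂ)‖ = t/2 := by
        rw [Complex.norm_real, Real.norm_of_nonneg (by linarith)]
      have h3 : ‖((1 - t/2 : ℝ) : ℂ) - z‖ = ‖z - ((1 - t/2 : ℝ) : ℂ)‖ :=
        by rw [← norm_neg]; ring_nf
      rw [h2, h3] at h1; linarith
  have hB1sub : B1 ⊆ Metric.ball (0 : ℂ) 1 := by
    intro z hz
    rw [Metric.mem_ball, Complex.dist_eq, sub_zero]
    exact (hB1 z hz).1
  have hB2sub : B2 ⊆ Metric.ball (0 : ℂ) 1 := Metric.ball_subset_ball (by norm_num)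
  have hB3sub : B3 ⊆ Metric.ball (0 : ℂ) 1 := by
    intro z hz
    rw [hB3def, Metric.mem_ball, Complex.dist_eq] at hz
    rw [Metric.mem_ball, Complex.dist_eq, sub_zero]
    have h1 : ‖z‖ ≤ ‖z - ((3/4 : ℝ) : ℂ)‖ +
        ‖((3/4 : ℝ) : ℂ)‖ := by
      simpa using norm_add_le (z - ((3/4 : ℝ) : ℂ)) (((3/4 : ℝ) : ℂ))
    have h2 : ‖((3/4 : ℝ) : ℂ)‖ = 3/4 := by
      rw [Complex.norm_real, Real.norm_eq_abs]; norm_num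
    rw [h2] at h1; linarith
  set A : Set ((ℂ × ℂ) × ℂ × ℂ) := (B1 ×ˢ B2) ×ˢ (B1 ×ˢ B3) with hAdef
  have hAsub : A ⊆ ((Metric.ball (0 : ℂ) 1 ×ˢ Metric.ball (0 : ℂ) 1) ×ˢ
      (Metric.ball (0 : ℂ) 1 ×ˢ Metric.ball (0 : ℂ) 1)) :=
    Set.prod_mono (Set.prod_mono hB1sub hB2sub) (Set.prod_mono hB1sub hB3sub)
  set c₀ : ℝ := (1/4 / ((2*t)^4 * 2^4))^2 with hc₀def
  have hc₀pos : 0 < c₀ := by positivity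
  -- pointwise lower bound on A
  have hpt : ∀ p ∈ A, ENNReal.ofReal c₀ ≤ ENNReal.ofReal
      (((‖p.1.1 - p.2.1‖ ^ 2 + ‖p.1.2 - p.2.2‖ ^ 2) /
        (‖1 - p.1.1 * (starRingEnd ℂ) p.2.1‖ ^ 4 *
          ‖1 - p.1.2 * (starRingEnd ℂ) p.2.2‖ ^ 4)) ^ 2) := by
    rintro ⟨⟨z₁, z₂⟩, w₁, w₂⟩ ⟨⟨hz₁, hz₂⟩, hw₁, hw₂⟩
    simp only
    obtain ⟨hz₁a, hz₁b⟩ := hB1 z₁ hz₁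
    obtain ⟨hw₁a, hw₁b⟩ := hB1 w₁ hw₁
    rw [hB2def, Metric.mem_ball, Complex.dist_eq, sub_zero] at hz₂
    rw [hB3def, Metric.mem_ball, Complex.dist_eq] at hw₂
    have hz₂a : ‖z₂‖ < 1/8 := hz₂
    have hw₂a : ‖w₂‖ < 7/8 := by
      have h1 : ‖w₂‖ ≤ ‖w₂ - ((3/4 : ℝ) : ℂ)‖ +
          ‖((3/4 : ℝ) : ℂ)‖ := by
        simpa using norm_add_le (w₂ - ((3/4 : ℝ) : ℂ)) (((3/4 : ℝ) : ℂ))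
      have h2 : ‖((3/4 : ℝ) : ℂ)‖ = 3/4 := by
        rw [Complex.norm_real, Real.norm_eq_abs]; norm_num
      rw [h2] at h1; linarith
    have hw₂b : (5/8 : ℝ) ≤ ‖w₂‖ := by
      have h1 : ‖((3/4 : ℝ) : ℂ)‖ ≤ ‖((3/4 : ℝ) : ℂ) - w₂‖ +
          ‖w₂‖ := by
        simpa using norm_add_le (((3/4 : ℝ) : ℂ) - w₂) w₂
      have h2 : ‖((3/4 : ℝ) : ℂ)‖ = 3/4 := by
        rw [Complex.norm_real, Real.norm_eq_abs]; norm_num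
      have h3 : ‖((3/4 : ℝ) : ℂ) - w₂‖ = ‖w₂ - ((3/4 : ℝ) : ℂ)‖ := by
        rw [← norm_neg]; ring_nf
      rw [h2, h3] at h1; linarith
    -- lower bound for numerator
    have hnum : (1/4 : ℝ) ≤ ‖z₁ - w₁‖ ^ 2 + ‖z₂ - w₂‖ ^ 2 := by
      have h1 : ‖w₂‖ ≤ ‖w₂ - z₂‖ + ‖z₂‖ := by
        simpa using norm_add_le (w₂ - z₂) z₂
      have h2 : ‖w₂ - z₂‖ = ‖z₂ - w₂‖ := by
        rw [← norm_neg]; ring_nf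
      rw [h2] at h1
      have h3 : (1/2 : ℝ) ≤ ‖z₂ - w₂‖ := by linarith
      nlinarith [norm_nonneg (z₁ - w₁), norm_nonneg (z₂ - w₂)]
    -- bounds on the denominators
    have hD1 : ‖1 - z₁ * (starRingEnd ℂ) w₁‖ ≤ 2 * t := by
      have he : (1 : ℂ) - z₁ * (starRingEnd ℂ) w₁ =
          (1 - z₁) + z₁ * (1 - (starRingEnd ℂ) w₁) := by ring
      have h1 : ‖(1:ℂ) - z₁ * (starRingEnd ℂ) w₁‖ ≤
          ‖1 - z₁‖ + ‖z₁ * (1 - (starRingEnd ℂ) w₁)‖ := by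
        rw [he]; exact norm_add_le _ _
      have h2 : ‖z₁ * (1 - (starRingEnd ℂ) w₁)‖ =
          ‖z₁‖ * ‖1 - w₁‖ := by
        rw [norm_mul]
        congr 1
        have : (1 : ℂ) - (starRingEnd ℂ) w₁ = (starRingEnd ℂ) (1 - w₁) := by
          rw [map_sub, map_one]
        rw [this, Complex.norm_conj]
      have h3 : ‖z₁‖ * ‖1 - w₁‖ ≤ 1 * t :=
        mul_le_mul hz₁a.le hw₁b.le (norm_nonneg _) zero_le_one
      rw [h2] at h1; linarith
    have hD1pos : 0 < ‖1 - z₁ * (starRingEnd ℂ) w₁‖ := by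
      have hlt : ‖z₁ * (starRingEnd ℂ) w₁‖ < 1 := by
        rw [norm_mul, Complex.norm_conj]
        nlinarith [norm_nonneg z₁, norm_nonneg w₁]
      have hne : (1 : ℂ) - z₁ * (starRingEnd ℂ) w₁ ≠ 0 := by
        intro h
        rw [sub_eq_zero] at h
        rw [← h] at hlt
        simp at hlt
      exact norm_pos_iff.mpr hne
    have hD2 : ‖1 - z₂ * (starRingEnd ℂ) w₂‖ ≤ 2 := by
      have h1 : ‖(1:ℂ) - z₂ * (starRingEnd ℂ) w₂‖ ≤
          ‖(1 : ℂ)‖ + ‖z₂ * (starRingEnd ℂ) w₂‖ := by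
        simpa [sub_eq_add_neg] using
          norm_add_le (1 : ℂ) (-(z₂ * (starRingEnd ℂ) w₂))
      have h2 : ‖z₂ * (starRingEnd ℂ) w₂‖ ≤ 1 := by
        rw [norm_mul, Complex.norm_conj]
        nlinarith [norm_nonneg z₂, norm_nonneg w₂]
      simp only [norm_one] at h1; linarith
    have hD2pos : 0 < ‖1 - z₂ * (starRingEnd ℂ) w₂‖ := by
      have hlt : ‖z₂ * (starRingEnd ℂ) w₂‖ < 1 := by
        rw [norm_mul, Complex.norm_conj]
        nlinarith [norm_nonneg z₂, norm_nonneg w₂]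
      have hne : (1 : ℂ) - z₂ * (starRingEnd ℂ) w₂ ≠ 0 := by
        intro h
        rw [sub_eq_zero] at h
        rw [← h] at hlt
        simp at hlt
      exact norm_pos_iff.mpr hne
    apply ENNReal.ofReal_le_ofReal
    rw [hc₀def]
    have hDen : ‖1 - z₁ * (starRingEnd ℂ) w₁‖ ^ 4 *
        ‖1 - z₂ * (starRingEnd ℂ) w₂‖ ^ 4 ≤ (2*t)^4 * 2^4 :=
      mul_le_mul (pow_le_pow_left₀ (norm_nonneg _) hD1 4)
        (pow_le_pow_left₀ (norm_nonneg _) hD2 4)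
        (by positivity) (by positivity)
    have hkey : 1/4 / ((2*t)^4 * 2^4) ≤
        (‖z₁ - w₁‖ ^ 2 + ‖z₂ - w₂‖ ^ 2) /
          (‖1 - z₁ * (starRingEnd ℂ) w₁‖ ^ 4 *
            ‖1 - z₂ * (starRingEnd ℂ) w₂‖ ^ 4) :=
      div_le_div₀ (by positivity) hnum (by positivity) hDen
    exact pow_le_pow_left₀ (by positivity) hkey 2
  -- measure of A
  have hπ : (NNReal.pi : ENNReal) = ENNReal.ofReal Real.pi := by
    rw [← NNReal.coe_real_pi, ENNReal.ofReal_coe_nnreal]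
  have hAmeas : volume A = ENNReal.ofReal
      (((t/4)^2 * Real.pi * ((1/8)^2 * Real.pi)) * ((t/4)^2 * Real.pi * ((1/8)^2 * Real.pi))) := by
    rw [hAdef, Measure.volume_eq_prod, Measure.prod_prod, Measure.volume_eq_prod,
      Measure.prod_prod, Measure.prod_prod, Complex.volume_ball, Complex.volume_ball,
      Complex.volume_ball, hπ]
    rw [← ENNReal.ofReal_pow (by positivity : (0:ℝ) ≤ t/4),
      ← ENNReal.ofReal_pow (by norm_num : (0:ℝ) ≤ 1/8)]
    rw [← ENNReal.ofReal_mul (by positivity : (0:ℝ) ≤ (t/4)^2),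
      ← ENNReal.ofReal_mul (by norm_num : (0:ℝ) ≤ (1/8:ℝ)^2),
      ← ENNReal.ofReal_mul (by positivity : (0:ℝ) ≤ (t/4)^2 * Real.pi),
      ← ENNReal.ofReal_mul (by positivity : (0:ℝ) ≤ (t/4)^2 * Real.pi * ((1/8:ℝ)^2 * Real.pi))]
  have hAmsble : MeasurableSet A :=
    ((Metric.isOpen_ball.measurableSet.prod Metric.isOpen_ball.measurableSet).prod
      (Metric.isOpen_ball.measurableSet.prod Metric.isOpen_ball.measurableSet))
  set M : ℝ := ((t/4)^2 * Real.pi * ((1/8)^2 * Real.pi)) *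
      ((t/4)^2 * Real.pi * ((1/8)^2 * Real.pi)) with hMdef
  -- the final real estimate
  have hcalc : c₀ * M = Real.pi^4 / (2^40 * t^4) := by
    rw [hc₀def, hMdef]; field_simp; ring
  have hfinal : (r : ℝ) ≤ c₀ * M := by
    rw [hcalc]
    have h4 : t^4 ≤ t := pow_le_of_le_one htpos.le ht1 (by norm_num)
    have h5 : (2:ℝ)^40 * t^4 ≤ 1/((r:ℝ)+1) := by
      calc (2:ℝ)^40 * t^4 ≤ 2^40 * t := by nlinarith
        _ ≤ 2^40 * (1/(2^40*((r:ℝ)+1))) := by nlinarith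
        _ = 1/((r:ℝ)+1) := by field_simp
    have h6 : (r:ℝ) ≤ 1/(2^40*t^4) := by
      rw [le_div_iff₀ (by positivity)]
      have h7 : (r:ℝ)*(1/((r:ℝ)+1)) ≤ 1 := by
        rw [mul_one_div]
        exact (div_le_one (by positivity)).2 (by linarith)
      nlinarith [mul_le_mul_of_nonneg_left h5 hr0]
    have h3 : (3:ℝ) ≤ Real.pi := by linarith [Real.pi_gt_three]
    have hπ4 : (1:ℝ) ≤ Real.pi^4 := by
      calc (1:ℝ) ≤ 3^4 := by norm_num
        _ ≤ Real.pi^4 := by gcongr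
    calc (r:ℝ) ≤ 1/(2^40*t^4) := h6
      _ ≤ Real.pi^4/(2^40*t^4) := by gcongr
  calc (r : ENNReal) = ENNReal.ofReal (r : ℝ) := ENNReal.ofReal_coe_nnreal.symm
    _ ≤ ENNReal.ofReal (c₀ * M) := ENNReal.ofReal_le_ofReal hfinal
    _ = ENNReal.ofReal c₀ * ENNReal.ofReal M := ENNReal.ofReal_mul hc₀pos.le
    _ = ENNReal.ofReal c₀ * volume A := by rw [hAmeas]
    _ = ∫⁻ _ in A, ENNReal.ofReal c₀ := (setLIntegral_const A _).symm
    _ ≤ ∫⁻ p in A,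
        ENNReal.ofReal
          (((‖p.1.1 - p.2.1‖ ^ 2 + ‖p.1.2 - p.2.2‖ ^ 2) /
            (‖1 - p.1.1 * (starRingEnd ℂ) p.2.1‖ ^ 4 *
              ‖1 - p.1.2 * (starRingEnd ℂ) p.2.2‖ ^ 4)) ^ 2) :=
        setLIntegral_mono' hAmsble hpt
    _ ≤ _ := lintegral_mono_set hAsub
end

section
/- The function K((z₁,z₂),(w₁,w₂)) = (|z₁−w₁|² + |z₂−w₂|²)/|1 − z₁·conj(w₁) − z₂·conj(w₂)|⁶ does not belong to L²(𝔹² × 𝔹²), i.e. ∫_{𝔹²×𝔹²} K(z,w)² dλ(z) dλ(w) = ∞. -/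
open MeasureTheory Set
open scoped ENNReal

noncomputable section BallKernelAux

namespace BallKernelAux

/-- A half-open rectangle in `ℂ`. -/
def crect (a b c d : ℝ) : Set ℂ :=
  Complex.measurableEquivRealProd ⁻¹' (Set.Ico a b ×ˢ Set.Ico c d)

lemma mem_crect {a b c d : ℝ} {z : ℂ} :
    z ∈ crect a b c d ↔ (a ≤ z.re ∧ z.re < b) ∧ (c ≤ z.im ∧ z.im < d) := Iff.rfl

lemma measurableSet_crect (a b c d : ℝ) : MeasurableSet (crect a b c d) :=
  Complex.measurableEquivRealProd.measurable (measurableSet_Ico.prod measurableSet_Ico)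

lemma volume_crect {a b c d : ℝ} :
    volume (crect a b c d) = ENNReal.ofReal (b - a) * ENNReal.ofReal (d - c) := by
  rw [crect, Complex.volume_preserving_equiv_real_prod.measure_preimage
      (measurableSet_Ico.prod measurableSet_Ico).nullMeasurableSet]
  rw [Measure.volume_eq_prod, Measure.prod_prod, Real.volume_Ico, Real.volume_Ico]

def zbox (t : ℝ) : Set (ℂ × ℂ) := crect (1 - 2*t) (1 - t) 0 t ×ˢ crect (t/2) t 0 t
def wbox (t : ℝ) : Set (ℂ × ℂ) := crect (1 - 2*t) (1 - t) 0 t ×ˢ crect (-t) (-t/2) 0 t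
def bbox (t : ℝ) : Set ((ℂ × ℂ) × ℂ × ℂ) := zbox t ×ˢ wbox t

def ball2 : Set (ℂ × ℂ) := {z : ℂ × ℂ | ‖z.1‖ ^ 2 + ‖z.2‖ ^ 2 < 1}

lemma sq_abs_eq (z : ℂ) : ‖z‖ ^ 2 = z.re ^ 2 + z.im ^ 2 := by
  rw [Complex.sq_norm, Complex.normSq_apply]; ring

lemma zbox_subset {t : ℝ} (ht : 0 < t) (ht' : t ≤ 1/4) : zbox t ⊆ ball2 := by
  rintro ⟨z₁, z₂⟩ ⟨h1, h2⟩
  rw [mem_crect] at h1 h2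
  obtain ⟨⟨ha, hb⟩, hc, hd⟩ := h1
  obtain ⟨⟨ha', hb'⟩, hc', hd'⟩ := h2
  simp only [ball2, mem_setOf_eq, sq_abs_eq]
  nlinarith [sq_nonneg z₁.im, sq_nonneg z₂.re, sq_nonneg z₂.im]

lemma wbox_subset {t : ℝ} (ht : 0 < t) (ht' : t ≤ 1/4) : wbox t ⊆ ball2 := by
  rintro ⟨z₁, z₂⟩ ⟨h1, h2⟩
  rw [mem_crect] at h1 h2
  obtain ⟨⟨ha, hb⟩, hc, hd⟩ := h1
  obtain ⟨⟨ha', hb'⟩, hc', hd'⟩ := h2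
  simp only [ball2, mem_setOf_eq, sq_abs_eq]
  nlinarith [sq_nonneg z₁.im, sq_nonneg z₂.im, sq_nonneg (z₂.re + t)]

lemma measurableSet_bbox (t : ℝ) : MeasurableSet (bbox t) :=
  (((measurableSet_crect _ _ _ _).prod (measurableSet_crect _ _ _ _)).prod
    ((measurableSet_crect _ _ _ _).prod (measurableSet_crect _ _ _ _)))

lemma volume_bbox {t : ℝ} (ht : 0 < t) : volume (bbox t) = ENNReal.ofReal (t^8 / 4) := by
  rw [bbox, Measure.volume_eq_prod, Measure.prod_prod,
    zbox, wbox, Measure.volume_eq_prod, Measure.prod_prod, Measure.prod_prod,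
    volume_crect, volume_crect, volume_crect]
  have e1 : (1:ℝ) - t - (1 - 2*t) = t := by ring
  have e2 : t - (0:ℝ) = t := by ring
  have e3 : t - t/2 = t/2 := by ring
  have e4 : -t/2 - -t = t/2 := by ring
  rw [e1, e2, e3, e4]
  have key : ENNReal.ofReal t * ENNReal.ofReal t * (ENNReal.ofReal (t/2) * ENNReal.ofReal t) *
      (ENNReal.ofReal t * ENNReal.ofReal t * (ENNReal.ofReal (t/2) * ENNReal.ofReal t)) =
      ENNReal.ofReal t ^ 6 * ENNReal.ofReal (t/2) ^ 2 := by ring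
  rw [key, ← ENNReal.ofReal_pow ht.le, ← ENNReal.ofReal_pow (by positivity : (0:ℝ) ≤ t/2),
    ← ENNReal.ofReal_mul (by positivity)]
  congr 1
  ring

set_option maxHeartbeats 1000000 in
lemma pointwise_bound {t : ℝ} (ht : 0 < t) (ht' : t ≤ 1/4)
    {p : (ℂ × ℂ) × ℂ × ℂ} (hp : p ∈ bbox t) :
    (t^2 / (8*t)^6)^2 ≤
      ((‖p.1.1 - p.2.1‖ ^ 2 + ‖p.1.2 - p.2.2‖ ^ 2) /
        ‖1 - p.1.1 * (starRingEnd ℂ) p.2.1 -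
          p.1.2 * (starRingEnd ℂ) p.2.2‖ ^ 6) ^ 2 := by
  obtain ⟨⟨z₁, z₂⟩, w₁, w₂⟩ := p
  simp only [bbox, zbox, wbox, Set.mem_prod, mem_crect] at hp
  obtain ⟨⟨⟨⟨hx1, hx2⟩, hy1, hy2⟩, ⟨hp1, hp2⟩, hq1, hq2⟩,
    ⟨⟨hu1, hu2⟩, hv1, hv2⟩, ⟨hr1, hr2⟩, hs1, hs2⟩ := hp
  dsimp only
  set E : ℂ := 1 - z₁ * (starRingEnd ℂ) w₁ - z₂ * (starRingEnd ℂ) w₂ with hE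
  have hRe : E.re = 1 - (z₁.re*w₁.re + z₁.im*w₁.im) - (z₂.re*w₂.re + z₂.im*w₂.im) := by
    simp [hE, Complex.sub_re, Complex.mul_re, Complex.conj_re, Complex.conj_im]
  have hIm : E.im = -(z₁.im*w₁.re - z₁.re*w₁.im) - (z₂.im*w₂.re - z₂.re*w₂.im) := by
    simp [hE, Complex.sub_im, Complex.mul_im, Complex.conj_re, Complex.conj_im]
    ring
  have A1 : (0:ℝ) ≤ (1 - t - z₁.re) * w₁.re :=
    mul_nonneg (by linarith) (by linarith)
  have A2 : (0:ℝ) ≤ (1 - t - w₁.re) * (1 - t) :=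
    mul_nonneg (by linarith) (by linarith)
  have A3 : (0:ℝ) ≤ (t - z₁.im) * w₁.im := mul_nonneg (by linarith) hv1
  have A4 : (0:ℝ) ≤ (t - w₁.im) * t := mul_nonneg (by linarith) ht.le
  have A5 : (0:ℝ) ≤ z₂.re * (-w₂.re) := mul_nonneg (by linarith) (by linarith)
  have A6 : (0:ℝ) ≤ (t - z₂.im) * w₂.im := mul_nonneg (by linarith) hs1
  have A7 : (0:ℝ) ≤ (t - w₂.im) * t := mul_nonneg (by linarith) ht.le
  have A8 : (0:ℝ) ≤ (1 - t) * t := mul_nonneg (by linarith) ht.le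
  have A9 : (0:ℝ) ≤ (1/4 - t) * t := mul_nonneg (by linarith) ht.le
  have hyv : (0:ℝ) ≤ z₁.im * w₁.im := mul_nonneg hy1 hv1
  have hqs : (0:ℝ) ≤ z₂.im * w₂.im := mul_nonneg hq1 hs1
  -- lower bound on the real part
  have hRelb : t ≤ E.re := by
    rw [hRe]; linarith
  have hDpos : t ≤ ‖E‖ := le_trans hRelb (Complex.re_le_norm E)
  -- upper bound on |E|
  have hDle : ‖E‖ ≤ 8*t := by
    refine le_trans (Complex.norm_le_abs_re_add_abs_im E) ?_
    have B1 : (0:ℝ) ≤ (z₁.re - (1 - 2*t)) * w₁.re := mul_nonneg (by linarith) (by linarith)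
    have B2 : (0:ℝ) ≤ (1 - w₁.re) * (2*t) := mul_nonneg (by linarith) (by linarith)
    have B3 : (0:ℝ) ≤ z₂.re * (w₂.re + t) := mul_nonneg (by linarith) (by linarith)
    have B4 : (0:ℝ) ≤ (t - z₂.re) * t := mul_nonneg (by linarith) ht.le
    have B5 : (0:ℝ) ≤ (1 - z₁.re) * w₁.re := mul_nonneg (by linarith) (by linarith)
    have h1 : |E.re| ≤ 5*t := by
      rw [hRe, abs_le]
      constructor
      · linarith
      · linarith
    have h2 : |E.im| ≤ 3*t := by
      have C1 : (0:ℝ) ≤ (1 - z₁.re) * w₁.im := mul_nonneg (by linarith) hv1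
      have C2 : (0:ℝ) ≤ z₁.re * w₁.im := mul_nonneg (by linarith) hv1
      have C3 : (0:ℝ) ≤ z₁.im * (1 - w₁.re) := mul_nonneg hy1 (by linarith)
      have C4 : (0:ℝ) ≤ z₁.im * w₁.re := mul_nonneg hy1 (by linarith)
      have C5 : (0:ℝ) ≤ (t - z₂.re) * w₂.im := mul_nonneg (by linarith) hs1
      have C6 : (0:ℝ) ≤ z₂.re * w₂.im := mul_nonneg (by linarith) hs1
      have C7 : (0:ℝ) ≤ z₂.im * (-w₂.re) := mul_nonneg hq1 (by linarith)
      have C8 : (0:ℝ) ≤ z₂.im * (w₂.re + t) := mul_nonneg hq1 (by linarith)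
      have C9 : (0:ℝ) ≤ (t - z₂.im) * t := mul_nonneg (by linarith) ht.le
      rw [hIm, abs_le]
      constructor
      · linarith
      · linarith
    linarith
  -- numerator bound
  have hnum : t^2 ≤ ‖z₁ - w₁‖ ^ 2 + ‖z₂ - w₂‖ ^ 2 := by
    have h1 : t ≤ (z₂ - w₂).re := by
      simp only [Complex.sub_re]; linarith
    have h2 : t ≤ ‖z₂ - w₂‖ := h1.trans (Complex.re_le_norm _)
    have h3 : t^2 ≤ ‖z₂ - w₂‖^2 := pow_le_pow_left₀ ht.le h2 2
    have h4 := sq_nonneg (‖z₁ - w₁‖)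
    linarith
  -- combine
  have hfrac : t^2 / (8*t)^6 ≤
      (‖z₁ - w₁‖ ^ 2 + ‖z₂ - w₂‖ ^ 2) / ‖E‖ ^ 6 := by
    apply div_le_div₀ (by positivity) hnum (pow_pos (lt_of_lt_of_le ht hDpos) 6)
    exact pow_le_pow_left₀ (norm_nonneg E) hDle 6
  have h0 : (0:ℝ) ≤ t^2 / (8*t)^6 := by positivity
  exact pow_le_pow_left₀ h0 hfrac 2

/-- The dyadic scales. -/
def dk (k : ℕ) : ℝ := (2:ℝ)⁻¹ ^ (k + 2)

lemma dk_pos (k : ℕ) : 0 < dk k := by rw [dk]; positivity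

lemma dk_le (k : ℕ) : dk k ≤ 1/4 := by
  have : ((2:ℝ)⁻¹) ^ (k+2) ≤ ((2:ℝ)⁻¹) ^ 2 :=
    pow_le_pow_of_le_one (by norm_num) (by norm_num) (by omega)
  simpa [dk] using this.trans_eq (by norm_num)

lemma dk_half {k l : ℕ} (h : k < l) : 2 * dk l ≤ dk k := by
  have : ((2:ℝ)⁻¹) ^ (l+2) ≤ ((2:ℝ)⁻¹) ^ (k+3) :=
    pow_le_pow_of_le_one (by norm_num) (by norm_num) (by omega)
  have e : ((2:ℝ)⁻¹) ^ (k+3) = (2:ℝ)⁻¹ * ((2:ℝ)⁻¹)^(k+2) := by ring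
  rw [dk, dk]
  nlinarith [this, e]

lemma bbox_disjoint : Pairwise (Function.onFun Disjoint fun k => bbox (dk k)) := by
  have key : ∀ k l : ℕ, k < l → Disjoint (bbox (dk k)) (bbox (dk l)) := by
    intro k l hkl
    rw [Set.disjoint_left]
    rintro ⟨⟨z₁, z₂⟩, w₁, w₂⟩ hk hl
    obtain ⟨⟨⟨⟨_, hb⟩, _⟩, _⟩, _⟩ := hk
    obtain ⟨⟨⟨⟨ha', _⟩, _⟩, _⟩, _⟩ := hl
    have := dk_half hkl
    simp only at hb ha'
    linarith
  intro k l hkl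
  rcases hkl.lt_or_gt with h | h
  · exact key k l h
  · exact (key l k h).symm

lemma box_integral_lb (k : ℕ) :
    ENNReal.ofReal ((1:ℝ)/(4 * 8^12)) ≤
      ∫⁻ p in bbox (dk k),
        ENNReal.ofReal
          (((‖p.1.1 - p.2.1‖ ^ 2 + ‖p.1.2 - p.2.2‖ ^ 2) /
            ‖1 - p.1.1 * (starRingEnd ℂ) p.2.1 -
              p.1.2 * (starRingEnd ℂ) p.2.2‖ ^ 6) ^ 2) := by
  set t := dk k with hdk
  have ht : 0 < t := dk_pos k
  have ht' : t ≤ 1/4 := dk_le k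
  calc ENNReal.ofReal ((1:ℝ)/(4 * 8^12))
      = ENNReal.ofReal ((t^2 / (8*t)^6)^2) * volume (bbox t) := by
        rw [volume_bbox ht, ← ENNReal.ofReal_mul (by positivity)]
        congr 1
        field_simp
    _ = ∫⁻ _ in bbox t, ENNReal.ofReal ((t^2 / (8*t)^6)^2) := by
        rw [setLIntegral_const]
    _ ≤ _ := by
        refine setLIntegral_mono' (measurableSet_bbox t) ?_
        intro p hp
        exact ENNReal.ofReal_le_ofReal (pointwise_bound ht ht' hp)

end BallKernelAux

end BallKernelAux

open BallKernelAux

/-- The kernel `K(z,w) = (|z₁−w₁|² + |z₂−w₂|²)/|1 − z₁·conj w₁ − z₂·conj w₂|⁶` is not square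
integrable over `𝔹² × 𝔹²`: the integral of `K²` over `𝔹² × 𝔹²` is infinite. -/
theorem ball_kernel_not_sq_integrable :
    ∫⁻ p in ({z : ℂ × ℂ | ‖z.1‖ ^ 2 + ‖z.2‖ ^ 2 < 1} ×ˢ
        {z : ℂ × ℂ | ‖z.1‖ ^ 2 + ‖z.2‖ ^ 2 < 1}),
      ENNReal.ofReal
        (((‖p.1.1 - p.2.1‖ ^ 2 + ‖p.1.2 - p.2.2‖ ^ 2) /
          ‖1 - p.1.1 * (starRingEnd ℂ) p.2.1 -
            p.1.2 * (starRingEnd ℂ) p.2.2‖ ^ 6) ^ 2) = ⊤ := by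
  rw [eq_top_iff]
  calc (⊤:ℝ≥0∞) = ∑' _ : ℕ, ENNReal.ofReal ((1:ℝ)/(4 * 8^12)) := by
        rw [ENNReal.tsum_const_eq_top_of_ne_zero]
        simp only [ne_eq, ENNReal.ofReal_eq_zero, not_le]
        norm_num
    _ ≤ ∑' k : ℕ, ∫⁻ p in bbox (dk k),
          ENNReal.ofReal
            (((‖p.1.1 - p.2.1‖ ^ 2 + ‖p.1.2 - p.2.2‖ ^ 2) /
              ‖1 - p.1.1 * (starRingEnd ℂ) p.2.1 -
                p.1.2 * (starRingEnd ℂ) p.2.2‖ ^ 6) ^ 2) :=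
        ENNReal.tsum_le_tsum box_integral_lb
    _ = ∫⁻ p in ⋃ k, bbox (dk k),
          ENNReal.ofReal
            (((‖p.1.1 - p.2.1‖ ^ 2 + ‖p.1.2 - p.2.2‖ ^ 2) /
              ‖1 - p.1.1 * (starRingEnd ℂ) p.2.1 -
                p.1.2 * (starRingEnd ℂ) p.2.2‖ ^ 6) ^ 2) :=
        (lintegral_iUnion (fun k => measurableSet_bbox _) bbox_disjoint _).symm
    _ ≤ _ := by
        refine lintegral_mono_set (Set.iUnion_subset fun k => ?_)
        exact Set.prod_mono (zbox_subset (dk_pos k) (dk_le k))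
          (wbox_subset (dk_pos k) (dk_le k))
end
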